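/- arXiv:2201.07276 — 3 statements merged into one kernel-verified Lean document; each statement's English description precedes it below -/
import Mathlib

section
/- For every integer i ≥ 2 and radius t > 0, the Lebesgue measure of the set of (y_1,…,y_{i−1}) ∈ (ℝ²)^{i−1} such that the geometric graph on the points {0, y_1, …, y_{i−1}} with connectivity radius t is connected, is at most i^{i−2} (π t²)^{i−1}. -/
open MeasureTheory
open scoped ENNReal

namespace GeomGraphAux

variable {α : Type*} [DecidableEq α] [LinearOrder α] [Inhabited α]

/-- Vertices of `V` that are not the `p`-parent of any vertex of `V`. -/
def leaves (p : α → α) (V : Finset α) : Finset α :=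
  V.filter (fun v => ∀ w ∈ V, p w ≠ v)

/-- Acyclicity of a parent function, witnessed by a rank function. -/
def Rank (p : α → α) (V : Finset α) : Prop :=
  ∃ r : α → ℕ, ∀ v ∈ V, r (p v) < r v

theorem Rank.subset {p : α → α} {V W : Finset α} (h : Rank p V) (hWV : W ⊆ V) : Rank p W := by
  obtain ⟨r, hr⟩ := h
  exact ⟨r, fun v hv => hr v (hWV hv)⟩

theorem leaves_nonempty {p : α → α} {V : Finset α} (h : Rank p V) (hV : V.Nonempty) :
    (leaves p V).Nonempty := by
  obtain ⟨r, hr⟩ := h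
  obtain ⟨v, hv, hmax⟩ := V.exists_max_image r hV
  refine ⟨v, Finset.mem_filter.mpr ⟨hv, fun w hw hpw => ?_⟩⟩
  have h1 := hr w hw
  rw [hpw] at h1
  exact absurd (hmax w hw) (not_le.mpr h1)

/-- Prüfer-type code of a parent function on vertex set `V`. -/
def enc (p : α → α) : ℕ → Finset α → List α
  | 0, _ => []
  | n+1, V =>
    if h : (leaves p V).Nonempty then
      p ((leaves p V).max' h) :: enc p n (V.erase ((leaves p V).max' h))
    else List.replicate (n+1) default

theorem enc_length (p : α → α) : ∀ (n : ℕ) (V : Finset α), (enc p n V).length = n := by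
  intro n
  induction n with
  | zero => intro V; rfl
  | succ n ih =>
    intro V
    simp only [enc]
    split
    · simp [ih]
    · simp

theorem mem_of_mem_enc {p : α → α} {x : α} :
    ∀ (n : ℕ) (V : Finset α), Rank p V → n ≤ V.card → x ∈ enc p n V → ∃ w ∈ V, p w = x := by
  intro n
  induction n with
  | zero => intro V _ _ h; simp [enc] at h
  | succ n ih =>
    intro V hrank hcard hx
    have hne : V.Nonempty := Finset.card_pos.mp (by omega)
    have hl := leaves_nonempty hrank hne
    simp only [enc] at hx
    rw [dif_pos hl] at hx
    set v := (leaves p V).max' hl with hv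
    have hvV : v ∈ V := (Finset.mem_filter.mp ((leaves p V).max'_mem hl)).1
    rcases List.mem_cons.mp hx with h | h
    · exact ⟨v, hvV, h.symm⟩
    · obtain ⟨w, hw, hpw⟩ := ih (V.erase v) (hrank.subset (Finset.erase_subset _ _))
        (by rw [Finset.card_erase_of_mem hvV]; omega) h
      exact ⟨w, Finset.mem_of_mem_erase hw, hpw⟩

theorem mem_enc_of_parent {p : α → α} :
    ∀ (n : ℕ) (V : Finset α), Rank p V → V.card = n + 1 →
      ∀ x w, w ∈ V → p w = x → x ∈ V → x ∈ enc p n V := by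
  intro n
  induction n with
  | zero =>
    intro V hrank hcard x w hw hpw hx
    exfalso
    have hwx : w = x := Finset.card_le_one.mp (by omega) w hw x hx
    obtain ⟨r, hr⟩ := hrank
    have h1 := hr w hw
    rw [hpw, ← hwx] at h1
    exact lt_irrefl _ h1
  | succ n ih =>
    intro V hrank hcard x w hw hpw hx
    have hne : V.Nonempty := ⟨w, hw⟩
    have hl := leaves_nonempty hrank hne
    simp only [enc]
    rw [dif_pos hl]
    set v := (leaves p V).max' hl with hv
    have hvleaf : v ∈ leaves p V := (leaves p V).max'_mem hl
    have hvV : v ∈ V := (Finset.mem_filter.mp hvleaf).1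
    have hxv : x ≠ v := by
      intro h
      subst h
      exact (Finset.mem_filter.mp hvleaf).2 w hw hpw
    by_cases hwv : w = v
    · subst hwv
      exact List.mem_cons.mpr (Or.inl hpw.symm)
    · refine List.mem_cons.mpr (Or.inr ?_)
      exact ih (V.erase v) (hrank.subset (Finset.erase_subset _ _))
        (by rw [Finset.card_erase_of_mem hvV]; omega) x w
        (Finset.mem_erase.mpr ⟨hwv, hw⟩) hpw (Finset.mem_erase.mpr ⟨hxv, hx⟩)

theorem enc_inj (rt : α) {p q : α → α} :
    ∀ (n : ℕ) (V : Finset α), Rank p V → Rank q V →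
      (∀ v ∈ V, p v ∈ insert rt V) → (∀ v ∈ V, q v ∈ insert rt V) →
      V.card = n + 1 → enc p n V = enc q n V → ∀ v ∈ V, p v = q v := by
  intro n
  induction n with
  | zero =>
    intro V hrp hrq hp hq hcard _ v hv
    have hne : ∀ (p' : α → α), Rank p' V → p' v ∈ insert rt V → p' v = rt := by
      intro p' hrp' hmem
      rcases Finset.mem_insert.mp hmem with h | h
      · exact h
      · exfalso
        have hpv : p' v = v := Finset.card_le_one.mp (by omega) _ h _ hv
        obtain ⟨r, hr⟩ := hrp'
        have h1 := hr v hv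
        rw [hpv] at h1
        exact lt_irrefl _ h1
    rw [hne p hrp (hp v hv), hne q hrq (hq v hv)]
  | succ n ih =>
    intro V hrp hrq hp hq hcard hcode v hv
    have hne : V.Nonempty := ⟨v, hv⟩
    have hlp := leaves_nonempty hrp hne
    have hlq := leaves_nonempty hrq hne
    have hiff : ∀ x ∈ V, ((∃ w ∈ V, p w = x) ↔ (∃ w ∈ V, q w = x)) := by
      intro x hx
      constructor
      · rintro ⟨w, hw, hpw⟩
        have hmem := mem_enc_of_parent (n+1) V hrp hcard x w hw hpw hx
        rw [hcode] at hmem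
        exact mem_of_mem_enc (n+1) V hrq (by omega) hmem
      · rintro ⟨w, hw, hqw⟩
        have hmem := mem_enc_of_parent (n+1) V hrq hcard x w hw hqw hx
        rw [← hcode] at hmem
        exact mem_of_mem_enc (n+1) V hrp (by omega) hmem
    have hleq : leaves p V = leaves q V := by
      ext x
      simp only [leaves, Finset.mem_filter]
      constructor
      · rintro ⟨hx, h⟩
        refine ⟨hx, fun w hw hqw => ?_⟩
        obtain ⟨w', hw', hpw'⟩ := (hiff x hx).mpr ⟨w, hw, hqw⟩
        exact h w' hw' hpw'
      · rintro ⟨hx, h⟩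
        refine ⟨hx, fun w hw hpw => ?_⟩
        obtain ⟨w', hw', hqw'⟩ := (hiff x hx).mp ⟨w, hw, hpw⟩
        exact h w' hw' hqw'
    set u := (leaves p V).max' hlp with hu
    have huleaf : u ∈ leaves p V := (leaves p V).max'_mem hlp
    have huV : u ∈ V := (Finset.mem_filter.mp huleaf).1
    have huq : u = (leaves q V).max' hlq := by
      apply le_antisymm
      · exact Finset.le_max' _ _ (by rw [← hleq]; exact huleaf)
      · exact Finset.max'_le _ _ _ (fun y hy => Finset.le_max' _ _ (by rw [hleq]; exact hy))
    simp only [enc] at hcode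
    rw [dif_pos hlp, dif_pos hlq, ← huq, ← hu] at hcode
    injection hcode with h1 h2
    by_cases hvu : v = u
    · subst hvu
      exact h1
    · have hrp' : Rank p (V.erase u) := hrp.subset (Finset.erase_subset _ _)
      have hrq' : Rank q (V.erase u) := hrq.subset (Finset.erase_subset _ _)
      have hp' : ∀ x ∈ V.erase u, p x ∈ insert rt (V.erase u) := by
        intro x hx
        have hxV := Finset.mem_of_mem_erase hx
        rcases Finset.mem_insert.mp (hp x hxV) with h | h
        · exact Finset.mem_insert.mpr (Or.inl h)
        · refine Finset.mem_insert.mpr (Or.inr (Finset.mem_erase.mpr ⟨?_, h⟩))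
          intro hpxu
          exact (Finset.mem_filter.mp huleaf).2 x hxV hpxu
      have hq' : ∀ x ∈ V.erase u, q x ∈ insert rt (V.erase u) := by
        intro x hx
        have hxV := Finset.mem_of_mem_erase hx
        rcases Finset.mem_insert.mp (hq x hxV) with h | h
        · exact Finset.mem_insert.mpr (Or.inl h)
        · refine Finset.mem_insert.mpr (Or.inr (Finset.mem_erase.mpr ⟨?_, h⟩))
          intro hqxu
          have huleafq : u ∈ leaves q V := by rw [← hleq]; exact huleaf
          exact (Finset.mem_filter.mp huleafq).2 x hxV hqxu
      exact ih (V.erase u) hrp' hrq' hp' hq'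
        (by rw [Finset.card_erase_of_mem huV]; omega) h2 v
        (Finset.mem_erase.mpr ⟨hvu, hv⟩)

/-- Cayley-type bound: the number of acyclic parent functions is at most `(k+1)^(k-1)`. -/
theorem card_bound (k : ℕ) (hk : 1 ≤ k) (S : Finset (Fin k → Fin (k+1)))
    (hS : ∀ P ∈ S, ∃ r : Fin (k+1) → ℕ, ∀ j : Fin k, r (P j) < r j.succ) :
    S.card ≤ (k+1)^(k-1) := by
  classical
  have hcv : Fintype.card (Fin (k-1) → Fin (k+1)) = (k+1)^(k-1) := by
    simp
  rw [← hcv, ← Finset.card_univ]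
  set V : Finset (Fin (k+1)) := Finset.univ.erase 0 with hV
  have hVcard : V.card = k := by
    rw [hV, Finset.card_erase_of_mem (Finset.mem_univ _), Finset.card_univ, Fintype.card_fin]
    omega
  have hrank : ∀ P ∈ S, Rank (Fin.cons 0 P : Fin (k+1) → Fin (k+1)) V := by
    intro P hP
    obtain ⟨r, hr⟩ := hS P hP
    refine ⟨r, fun v hv => ?_⟩
    obtain ⟨j, rfl⟩ := Fin.exists_succ_eq_of_ne_zero (Finset.mem_erase.mp hv).1
    simpa using hr j
  have hins : insert (0 : Fin (k+1)) V = Finset.univ := by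
    rw [hV, Finset.insert_erase (Finset.mem_univ _)]
  apply Finset.card_le_card_of_injOn
    (fun P (i : Fin (k-1)) => (enc (Fin.cons 0 P : Fin (k+1) → Fin (k+1)) (k-1) V).get
      (⟨i.1, by rw [enc_length]; exact i.2⟩))
  · intro P _
    exact Finset.mem_univ _
  · intro P hP Q hQ hPQ
    have hcode : enc (Fin.cons 0 P : Fin (k+1) → Fin (k+1)) (k-1) V
        = enc (Fin.cons 0 Q : Fin (k+1) → Fin (k+1)) (k-1) V := by
      apply List.ext_get (by rw [enc_length, enc_length])
      intro n h1 h2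
      have hn : n < k - 1 := by
        have := h1
        rw [enc_length] at this
        exact this
      exact congrFun hPQ ⟨n, hn⟩
    have hall := enc_inj (0 : Fin (k+1)) (k-1) V (hrank P hP) (hrank Q hQ)
      (fun v _ => by rw [hins]; exact Finset.mem_univ _)
      (fun v _ => by rw [hins]; exact Finset.mem_univ _)
      (by omega) hcode
    funext j
    have hj : j.succ ∈ V := Finset.mem_erase.mpr ⟨Fin.succ_ne_zero j, Finset.mem_univ _⟩
    have := hall j.succ hj
    simpa using this

end GeomGraphAux

section MeasureSide

open GeomGraphAux

theorem geom_cons_continuous {k : ℕ} (v : Fin (k+1)) :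
    Continuous fun y : Fin k → EuclideanSpace ℝ (Fin 2) =>
      (Fin.cons 0 y : Fin (k+1) → EuclideanSpace ℝ (Fin 2)) v := by
  rcases Fin.eq_zero_or_eq_succ v with rfl | ⟨i, rfl⟩
  · simp only [Fin.cons_zero]
    exact continuous_const
  · simp only [Fin.cons_succ]
    exact continuous_apply i

theorem geom_factor_measurable {k : ℕ} (t : ℝ) (v : Fin (k+1)) (j : Fin k) :
    MeasurableSet {y : Fin k → EuclideanSpace ℝ (Fin 2) |
      dist (y j) ((Fin.cons 0 y : Fin (k+1) → EuclideanSpace ℝ (Fin 2)) v) ≤ t} := by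
  exact (isClosed_le ((continuous_apply j).dist (geom_cons_continuous v))
    continuous_const).measurableSet

theorem geom_cons_update {k : ℕ} (x : Fin k → EuclideanSpace ℝ (Fin 2)) (j0 : Fin k)
    (xi : EuclideanSpace ℝ (Fin 2)) (v : Fin (k+1)) (hv : v ≠ j0.succ) :
    (Fin.cons 0 (Function.update x j0 xi) : Fin (k+1) → EuclideanSpace ℝ (Fin 2)) v
      = (Fin.cons 0 x : Fin (k+1) → EuclideanSpace ℝ (Fin 2)) v := by
  rcases Fin.eq_zero_or_eq_succ v with rfl | ⟨i, rfl⟩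
  · simp
  · simp only [Fin.cons_succ]
    exact Function.update_of_ne (fun h => hv (by rw [h])) _ _

theorem geom_ball_volume (t : ℝ) (ht : 0 < t) (c : EuclideanSpace ℝ (Fin 2)) :
    volume (Metric.closedBall c t) = ENNReal.ofReal (Real.pi * t ^ 2) := by
  rw [EuclideanSpace.volume_closedBall]
  have h2 : (Fintype.card (Fin 2)) = 2 := by simp
  rw [h2]
  rw [show ((2:ℕ):ℝ)/2 + 1 = 2 by norm_num]
  rw [Real.Gamma_two, Real.sq_sqrt Real.pi_pos.le, div_one]
  rw [← ENNReal.ofReal_pow ht.le, ← ENNReal.ofReal_mul (by positivity)]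
  rw [mul_comm]

theorem geom_marginal_bound {k : ℕ} (t : ℝ) (ht : 0 < t) (P : Fin k → Fin (k+1))
    (r : Fin (k+1) → ℕ) (hr : ∀ j : Fin k, r (P j) < r j.succ) :
    ∀ (n : ℕ) (s : Finset (Fin k)), s.card = n → ∀ x : Fin k → EuclideanSpace ℝ (Fin 2),
      MeasureTheory.lmarginal (fun _ : Fin k => (volume : Measure (EuclideanSpace ℝ (Fin 2)))) s
        (fun y => ∏ j ∈ s,
          if dist (y j) ((Fin.cons 0 y : Fin (k+1) → EuclideanSpace ℝ (Fin 2)) (P j)) ≤ t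
          then (1:ℝ≥0∞) else 0) x
      ≤ ENNReal.ofReal (Real.pi * t ^ 2) ^ n := by
  classical
  have hFmeas : ∀ (u : Finset (Fin k)),
      Measurable (fun y : Fin k → EuclideanSpace ℝ (Fin 2) => ∏ j ∈ u,
        if dist (y j) ((Fin.cons 0 y : Fin (k+1) → EuclideanSpace ℝ (Fin 2)) (P j)) ≤ t
        then (1:ℝ≥0∞) else 0) := by
    intro u
    refine Finset.measurable_prod u (fun j _ => ?_)
    exact Measurable.ite (geom_factor_measurable t (P j) j) measurable_const measurable_const
  intro n
  induction n with
  | zero =>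
    intro s hs x
    obtain rfl := Finset.card_eq_zero.mp hs
    rw [MeasureTheory.lmarginal_empty]
    simp
  | succ n ih =>
    intro s hs x
    have hne : s.Nonempty := Finset.card_pos.mp (by omega)
    obtain ⟨j0, hj0s, hmax⟩ := s.exists_max_image (fun j => r j.succ) hne
    set a := ENNReal.ofReal (Real.pi * t ^ 2) with ha
    have hPne : ∀ j ∈ s, P j ≠ j0.succ := by
      intro j hj h
      have h1 := hr j
      rw [h] at h1
      exact absurd (hmax j hj) (not_le.mpr h1)
    rw [MeasureTheory.lmarginal_erase' _ (hFmeas s) hj0s]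
    have hinner : ∀ z : Fin k → EuclideanSpace ℝ (Fin 2),
        (∫⁻ xi, (∏ j ∈ s,
            if dist ((Function.update z j0 xi) j)
              ((Fin.cons 0 (Function.update z j0 xi) : Fin (k+1) → EuclideanSpace ℝ (Fin 2))
                (P j)) ≤ t
            then (1:ℝ≥0∞) else 0) ∂volume)
        = (∏ j ∈ s.erase j0,
            if dist (z j) ((Fin.cons 0 z : Fin (k+1) → EuclideanSpace ℝ (Fin 2)) (P j)) ≤ t
            then (1:ℝ≥0∞) else 0) * a := by
      intro z
      have hsplit : ∀ xi : EuclideanSpace ℝ (Fin 2),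
          (∏ j ∈ s,
            if dist ((Function.update z j0 xi) j)
              ((Fin.cons 0 (Function.update z j0 xi) : Fin (k+1) → EuclideanSpace ℝ (Fin 2))
                (P j)) ≤ t
            then (1:ℝ≥0∞) else 0)
          = (∏ j ∈ s.erase j0,
              if dist (z j) ((Fin.cons 0 z : Fin (k+1) → EuclideanSpace ℝ (Fin 2)) (P j)) ≤ t
              then (1:ℝ≥0∞) else 0)
            * (if xi ∈ Metric.closedBall
                ((Fin.cons 0 z : Fin (k+1) → EuclideanSpace ℝ (Fin 2)) (P j0)) t
               then (1:ℝ≥0∞) else 0) := by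
        intro xi
        rw [← Finset.prod_erase_mul s _ hj0s]
        congr 1
        · refine Finset.prod_congr rfl (fun j hj => ?_)
          have hjne : j ≠ j0 := (Finset.mem_erase.mp hj).1
          rw [Function.update_of_ne hjne,
            geom_cons_update z j0 xi (P j) (hPne j (Finset.mem_of_mem_erase hj))]
        · rw [Function.update_self, geom_cons_update z j0 xi (P j0) (hPne j0 hj0s),
            Metric.mem_closedBall]
      simp_rw [hsplit]
      rw [MeasureTheory.lintegral_const_mul' _ _ (by
        refine ne_top_of_le_ne_top (?_ : (1:ℝ≥0∞) ≠ ⊤) ?_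
        · exact ENNReal.one_ne_top
        · exact Finset.prod_le_one (fun j _ => zero_le) (fun j _ => by split <;> simp))]
      congr 1
      have hind : (fun xi : EuclideanSpace ℝ (Fin 2) =>
          if xi ∈ Metric.closedBall
            ((Fin.cons 0 z : Fin (k+1) → EuclideanSpace ℝ (Fin 2)) (P j0)) t
          then (1:ℝ≥0∞) else 0)
          = (Metric.closedBall
              ((Fin.cons 0 z : Fin (k+1) → EuclideanSpace ℝ (Fin 2)) (P j0)) t).indicator
              (1 : EuclideanSpace ℝ (Fin 2) → ℝ≥0∞) := by
        funext xi
        rw [Set.indicator_apply]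
        rfl
      rw [hind, MeasureTheory.lintegral_indicator_one measurableSet_closedBall]
      exact geom_ball_volume t ht _
    calc MeasureTheory.lmarginal (fun _ : Fin k => (volume : Measure (EuclideanSpace ℝ (Fin 2))))
          (s.erase j0) (fun z => ∫⁻ xi, (fun y => ∏ j ∈ s,
            if dist (y j) ((Fin.cons 0 y : Fin (k+1) → EuclideanSpace ℝ (Fin 2)) (P j)) ≤ t
            then (1:ℝ≥0∞) else 0) (Function.update z j0 xi) ∂volume) x
        ≤ MeasureTheory.lmarginal (fun _ : Fin k => (volume : Measure (EuclideanSpace ℝ (Fin 2))))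
          (s.erase j0) (fun z => (∏ j ∈ s.erase j0,
            if dist (z j) ((Fin.cons 0 z : Fin (k+1) → EuclideanSpace ℝ (Fin 2)) (P j)) ≤ t
            then (1:ℝ≥0∞) else 0) * a) x := by
          exact MeasureTheory.lmarginal_mono (fun z => le_of_eq (hinner z)) x
      _ = MeasureTheory.lmarginal (fun _ : Fin k => (volume : Measure (EuclideanSpace ℝ (Fin 2))))
          (s.erase j0) (fun z => ∏ j ∈ s.erase j0,
            if dist (z j) ((Fin.cons 0 z : Fin (k+1) → EuclideanSpace ℝ (Fin 2)) (P j)) ≤ t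
            then (1:ℝ≥0∞) else 0) x * a := by
          unfold MeasureTheory.lmarginal
          exact MeasureTheory.lintegral_mul_const' a _ ENNReal.ofReal_ne_top
      _ ≤ a ^ n * a := by
          exact mul_le_mul_left
            (ih (s.erase j0) (by rw [Finset.card_erase_of_mem hj0s]; omega) x) a
      _ = a ^ (n+1) := (pow_succ a n).symm

end MeasureSide

/-- Volume bound for connected geometric graphs in the plane: for `i = k + 1 ≥ 2`
points and radius `t > 0`, the Lebesgue measure of the set of
`(y_1, …, y_{i−1}) ∈ (ℝ²)^{i−1}` such that the geometric graph with radius `t` on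
the points `{0, y_1, …, y_{i−1}}` is connected is at most `i^{i−2} (π t²)^{i−1}`. -/
theorem volume_connected_geometric_graph_le
    (k : ℕ) (hk : 1 ≤ k) (t : ℝ) (ht : 0 < t) :
    volume {y : Fin k → EuclideanSpace ℝ (Fin 2) |
        (SimpleGraph.fromRel (fun a b : Fin (k + 1) =>
          dist ((Fin.cons 0 y : Fin (k + 1) → EuclideanSpace ℝ (Fin 2)) a)
            ((Fin.cons 0 y : Fin (k + 1) → EuclideanSpace ℝ (Fin 2)) b) ≤ t)).Connected}
      ≤ ENNReal.ofReal ((k + 1 : ℝ) ^ (k - 1) * (Real.pi * t ^ 2) ^ k) := by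
  classical
  set a := ENNReal.ofReal (Real.pi * t ^ 2) with ha
  set S : Finset (Fin k → Fin (k+1)) := Finset.univ.filter
    (fun P => ∃ r : Fin (k+1) → ℕ, ∀ j : Fin k, r (P j) < r j.succ) with hS
  set A : (Fin k → Fin (k+1)) → Set (Fin k → EuclideanSpace ℝ (Fin 2)) := fun P =>
    {y | ∀ j : Fin k,
      dist (y j) ((Fin.cons 0 y : Fin (k+1) → EuclideanSpace ℝ (Fin 2)) (P j)) ≤ t} with hA
  have hsub : {y : Fin k → EuclideanSpace ℝ (Fin 2) |
        (SimpleGraph.fromRel (fun a b : Fin (k + 1) =>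
          dist ((Fin.cons 0 y : Fin (k + 1) → EuclideanSpace ℝ (Fin 2)) a)
            ((Fin.cons 0 y : Fin (k + 1) → EuclideanSpace ℝ (Fin 2)) b) ≤ t)).Connected}
      ⊆ ⋃ P ∈ S, A P := by
    intro y hy
    simp only [Set.mem_setOf_eq] at hy
    set G := SimpleGraph.fromRel (fun a b : Fin (k + 1) =>
      dist ((Fin.cons 0 y : Fin (k + 1) → EuclideanSpace ℝ (Fin 2)) a)
        ((Fin.cons 0 y : Fin (k + 1) → EuclideanSpace ℝ (Fin 2)) b) ≤ t) with hG
    have hstep : ∀ v : Fin (k+1), v ≠ 0 → ∃ u : Fin (k+1),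
        G.dist u 0 < G.dist v 0 ∧
        dist ((Fin.cons 0 y : Fin (k+1) → EuclideanSpace ℝ (Fin 2)) v)
          ((Fin.cons 0 y : Fin (k+1) → EuclideanSpace ℝ (Fin 2)) u) ≤ t := by
      intro v hv
      obtain ⟨w, hw⟩ := hy.exists_walk_length_eq_dist v 0
      cases w with
      | nil => exact absurd rfl hv
      | cons hadj q =>
        rename_i u'
        refine ⟨u', ?_, ?_⟩
        · have h1 : G.dist u' 0 ≤ q.length := SimpleGraph.dist_le q
          have h2 : q.length + 1 = G.dist v 0 := by simpa using hw
          omega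
        · rw [hG, SimpleGraph.fromRel_adj] at hadj
          rcases hadj.2 with h | h
          · exact h
          · rw [dist_comm]; exact h
    choose u hu1 hu2 using fun j : Fin k => hstep j.succ (Fin.succ_ne_zero j)
    refine Set.mem_iUnion₂.mpr ⟨u, ?_, ?_⟩
    · rw [hS, Finset.mem_filter]
      exact ⟨Finset.mem_univ _, ⟨fun v => G.dist v 0, fun j => hu1 j⟩⟩
    · intro j
      have h := hu2 j
      rwa [Fin.cons_succ] at h
  have hAbound : ∀ P ∈ S, volume (A P) ≤ a ^ k := by
    intro P hP
    obtain ⟨r, hr⟩ := (Finset.mem_filter.mp hP).2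
    have hmeas : MeasurableSet (A P) := by
      have : A P = ⋂ j : Fin k, {y : Fin k → EuclideanSpace ℝ (Fin 2) |
          dist (y j) ((Fin.cons 0 y : Fin (k+1) → EuclideanSpace ℝ (Fin 2)) (P j)) ≤ t} := by
        ext y
        simp [hA, Set.mem_iInter]
      rw [this]
      exact MeasurableSet.iInter (fun j => geom_factor_measurable t (P j) j)
    have hprod : (fun y : Fin k → EuclideanSpace ℝ (Fin 2) => ∏ j ∈ Finset.univ,
        if dist (y j) ((Fin.cons 0 y : Fin (k+1) → EuclideanSpace ℝ (Fin 2)) (P j)) ≤ t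
        then (1:ℝ≥0∞) else 0) = (A P).indicator (fun _ => 1) := by
      funext y
      by_cases h : y ∈ A P
      · rw [Set.indicator_of_mem h]
        exact Finset.prod_eq_one (fun j _ => if_pos (h j))
      · rw [Set.indicator_of_notMem h]
        rw [hA, Set.mem_setOf_eq] at h
        push_neg at h
        obtain ⟨j, hj⟩ := h
        exact Finset.prod_eq_zero (Finset.mem_univ j) (if_neg (not_le.mpr hj))
    have hvol : volume (A P) = ∫⁻ y, ∏ j ∈ Finset.univ,
        (if dist (y j) ((Fin.cons 0 y : Fin (k+1) → EuclideanSpace ℝ (Fin 2)) (P j)) ≤ t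
         then (1:ℝ≥0∞) else 0) ∂volume := by
      rw [hprod]
      exact (MeasureTheory.lintegral_indicator_one hmeas).symm
    rw [hvol, MeasureTheory.volume_pi,
      MeasureTheory.lintegral_eq_lmarginal_univ (fun _ : Fin k => (0 : EuclideanSpace ℝ (Fin 2)))]
    have := geom_marginal_bound t ht P r hr k Finset.univ (by simp) (fun _ => 0)
    exact this
  calc volume {y : Fin k → EuclideanSpace ℝ (Fin 2) |
        (SimpleGraph.fromRel (fun a b : Fin (k + 1) =>
          dist ((Fin.cons 0 y : Fin (k + 1) → EuclideanSpace ℝ (Fin 2)) a)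
            ((Fin.cons 0 y : Fin (k + 1) → EuclideanSpace ℝ (Fin 2)) b) ≤ t)).Connected}
      ≤ volume (⋃ P ∈ S, A P) := measure_mono hsub
    _ ≤ ∑ P ∈ S, volume (A P) := measure_biUnion_finset_le S A
    _ ≤ ∑ _P ∈ S, a ^ k := Finset.sum_le_sum hAbound
    _ = S.card • a ^ k := Finset.sum_const _
    _ ≤ ((k+1)^(k-1) : ℕ) • a ^ k := by
        have hcard : S.card ≤ (k+1)^(k-1) := by
          apply GeomGraphAux.card_bound k hk
          intro P hP
          exact (Finset.mem_filter.mp hP).2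
        rw [nsmul_eq_mul, nsmul_eq_mul]
        exact mul_le_mul_left (by exact_mod_cast Nat.cast_le.mpr hcard) _
    _ = ENNReal.ofReal ((k + 1 : ℝ) ^ (k - 1) * (Real.pi * t ^ 2) ^ k) := by
        rw [nsmul_eq_mul, ENNReal.ofReal_mul (by positivity)]
        congr 1
        · rw [show ((k + 1 : ℝ)) ^ (k-1) = (((k+1)^(k-1) : ℕ) : ℝ) by push_cast; ring]
          rw [ENNReal.ofReal_natCast]
        · rw [ENNReal.ofReal_pow (by positivity), ha]
end

section
/- The function I(x) = x log(x/μ) − x + μ (with I(0) = μ, I(x) = ∞ for x < 0) is the Cramér rate function for sums of i.i.d. Poisson(μ) random variables: for i.i.d. X_1, X_2, … ~ Poisson(μ) and any closed set F ⊆ ℝ, limsup_n (1/n) log P(n^{-1} Σ_{i=1}^n X_i ∈ F) ≤ − inf_{x∈F} I(x), and for any open set G, liminf_n (1/n) log P(n^{-1} Σ X_i ∈ G) ≥ − inf_{x∈G} I(x). -/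
open MeasureTheory ProbabilityTheory Filter Real
open scoped NNReal ENNReal

open scoped Topology

/-- Poisson point mass with real parameter. -/
noncomputable def cpq (lam : ℝ) (k : ℕ) : ℝ := Real.exp (-lam) * lam ^ k / (Nat.factorial k)

lemma cpq_nonneg {lam : ℝ} (hlam : 0 ≤ lam) (k : ℕ) : 0 ≤ cpq lam k := by
  unfold cpq; positivity

lemma cpq_pos {lam : ℝ} (hlam : 0 < lam) (k : ℕ) : 0 < cpq lam k := by
  unfold cpq; positivity

lemma cpq_hasSum_exp (lam t : ℝ) :
    HasSum (fun k : ℕ => Real.exp (t * k) * cpq lam k)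
      (Real.exp (lam * Real.exp t - lam)) := by
  have h : HasSum (fun k : ℕ => (lam * Real.exp t) ^ k / (Nat.factorial k))
      (Real.exp (lam * Real.exp t)) := by
    have := NormedSpace.expSeries_div_hasSum_exp (lam * Real.exp t)
    rwa [← Real.exp_eq_exp_ℝ] at this
  have h2 := h.mul_left (Real.exp (-lam))
  have he : Real.exp (-lam) * Real.exp (lam * Real.exp t)
      = Real.exp (lam * Real.exp t - lam) := by
    rw [← Real.exp_add]; ring_nf
  rw [he] at h2
  convert h2 using 2 with k
  · rfl
  unfold cpq
  rw [mul_pow, ← Real.exp_nat_mul]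
  ring

lemma cpq_summable (lam : ℝ) : Summable (cpq lam) := by
  have := (cpq_hasSum_exp lam 0).summable
  simpa using this

lemma cpq_hasSum_one (lam : ℝ) : HasSum (cpq lam) (Real.exp (lam * 1 - lam)) := by
  have := cpq_hasSum_exp lam 0
  simpa using this

lemma cpq_tsum_subtype_le_exp {lam : ℝ} (hlam : 0 ≤ lam) (A : Set ℕ) (x t : ℝ)
    (hA : ∀ k ∈ A, 0 ≤ t * k - t * x) :
    ∑' k : A, cpq lam k ≤ Real.exp (lam * Real.exp t - lam - t * x) := by
  have hsum : Summable (fun k : ℕ => Real.exp (t * k - t * x) * cpq lam k) := by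
    have := (cpq_hasSum_exp lam t).summable.mul_left (Real.exp (-(t * x)))
    refine this.congr fun k => ?_
    rw [← mul_assoc, ← Real.exp_add]
    ring_nf
  have hnn : ∀ k : ℕ, 0 ≤ Real.exp (t * k - t * x) * cpq lam k :=
    fun k => mul_nonneg (Real.exp_nonneg _) (cpq_nonneg hlam k)
  calc ∑' k : A, cpq lam k
      ≤ ∑' k : A, Real.exp (t * (k : ℕ) - t * x) * cpq lam (k : ℕ) := by
        refine Summable.tsum_le_tsum (fun k => ?_) ((cpq_summable lam).subtype A)
          (hsum.subtype A)
        have h1 : (1 : ℝ) ≤ Real.exp (t * (k : ℕ) - t * x) := by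
          rw [Real.one_le_exp_iff]
          have := hA k k.2
          linarith
        nlinarith [cpq_nonneg hlam (k : ℕ)]
    _ ≤ ∑' k : ℕ, Real.exp (t * k - t * x) * cpq lam k := by
        rw [tsum_subtype A (fun k => Real.exp (t * k - t * x) * cpq lam k)]
        exact Summable.tsum_le_tsum (fun k => Set.indicator_le_self' (fun k _ => hnn k) k)
          (hsum.indicator A) hsum
    _ = Real.exp (lam * Real.exp t - lam - t * x) := by
        have h2 := ((cpq_hasSum_exp lam t).mul_left (Real.exp (-(t * x)))).tsum_eq
        rw [show (fun k : ℕ => Real.exp (t * k - t * x) * cpq lam k)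
            = fun k : ℕ => Real.exp (-(t * x)) * (Real.exp (t * k) * cpq lam k) by
          funext k; rw [← mul_assoc, ← Real.exp_add]; ring_nf]
        rw [h2, ← Real.exp_add]; ring_nf

lemma factorial_le_stirling (k : ℕ) (hk : 1 ≤ k) :
    (Nat.factorial k : ℝ) ≤ Real.exp 1 * k * ((k : ℝ) / Real.exp 1) ^ k := by
  obtain ⟨m, rfl⟩ : ∃ m, k = m + 1 := ⟨k - 1, (Nat.succ_pred_eq_of_pos hk).symm⟩
  set k := m + 1
  have hkpos : (0 : ℝ) < k := by positivity
  have hdenpos : (0 : ℝ) < Real.sqrt (2 * k) * ((k : ℝ) / Real.exp 1) ^ k := by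
    positivity
  have h1 : Stirling.stirlingSeq k ≤ Real.exp 1 / Real.sqrt 2 := by
    have := Stirling.stirlingSeq'_antitone (Nat.zero_le m)
    simpa using this
  have h2 : (Nat.factorial k : ℝ)
      = Stirling.stirlingSeq k * (Real.sqrt (2 * k) * ((k : ℝ) / Real.exp 1) ^ k) := by
    rw [Stirling.stirlingSeq, div_mul_cancel₀]
    exact ne_of_gt hdenpos
  rw [h2]
  have h3 : Real.sqrt (2 * k) = Real.sqrt 2 * Real.sqrt k := Real.sqrt_mul (by norm_num) _
  calc Stirling.stirlingSeq k * (Real.sqrt (2 * k) * ((k : ℝ) / Real.exp 1) ^ k)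
      ≤ (Real.exp 1 / Real.sqrt 2) * (Real.sqrt (2 * k) * ((k : ℝ) / Real.exp 1) ^ k) := by
        apply mul_le_mul_of_nonneg_right h1 (le_of_lt hdenpos)
    _ = Real.exp 1 * Real.sqrt k * ((k : ℝ) / Real.exp 1) ^ k := by
        rw [h3]; field_simp
    _ ≤ Real.exp 1 * k * ((k : ℝ) / Real.exp 1) ^ k := by
        have hs : Real.sqrt k ≤ (k : ℝ) := by
          have h1k : (1:ℝ) ≤ (k:ℝ) := by exact_mod_cast hk
          nlinarith [Real.sq_sqrt (le_of_lt hkpos), Real.sqrt_nonneg (k:ℝ),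
            Real.one_le_sqrt.mpr h1k]
        have hp : (0:ℝ) ≤ ((k : ℝ) / Real.exp 1) ^ k := by positivity
        have he := Real.exp_pos 1
        have := mul_le_mul_of_nonneg_right (mul_le_mul_of_nonneg_left hs (le_of_lt he)) hp
        linarith

lemma log_div_aux (x : ℝ) (hx : 0 < x) :
    Filter.Tendsto (fun n : ℕ => Real.log ((n : ℝ) * x + 1) / n) atTop (𝓝 0) := by
  have h1 : Filter.Tendsto (fun t : ℝ => Real.log t ^ 1 / ((1/x) * t + (-(1/x))))
      atTop (𝓝 0) := Real.tendsto_pow_log_div_mul_add_atTop (1/x) (-(1/x)) 1 (by positivity)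
  have h2 : Filter.Tendsto (fun n : ℕ => (n : ℝ) * x + 1) atTop atTop := by
    apply Filter.tendsto_atTop_add_const_right
    exact Tendsto.atTop_mul_const hx tendsto_natCast_atTop_atTop
  have h3 := h1.comp h2
  rw [show (0:ℝ) = 0 from rfl] at h3
  apply h3.congr'
  filter_upwards [eventually_ge_atTop 1] with n hn
  have hn1 : (1:ℝ) ≤ (n:ℝ) := by exact_mod_cast hn
  simp only [Function.comp_apply, pow_one]
  congr 1
  field_simp
  ring

lemma cpq_lower_eventually (μ' x c : ℝ) (hμ : 0 < μ') (hx : 0 < x)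
    (hc : x * Real.log (x / μ') - x + μ' < c)
    (k : ℕ → ℕ) (hy : Tendsto (fun n : ℕ => (k n : ℝ) / n) atTop (𝓝 x))
    (hub : ∀ᶠ n : ℕ in atTop, (k n : ℝ) ≤ n * x + 1)
    (hk1 : ∀ᶠ n : ℕ in atTop, 1 ≤ k n) :
    ∀ᶠ n : ℕ in atTop, Real.exp (-c * n) ≤ cpq ((n : ℝ) * μ') (k n) := by
  set G : ℕ → ℝ := fun n => -μ' - ((k n : ℝ) / n) * Real.log (((k n : ℝ) / n) / μ')
      + (k n : ℝ) / n - (1 + Real.log (k n)) / n with hG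
  -- limit of G
  have hT2 : Tendsto (fun n : ℕ => ((k n : ℝ) / n) * Real.log (((k n : ℝ) / n) / μ'))
      atTop (𝓝 (x * Real.log (x / μ'))) := by
    refine hy.mul ?_
    have hcont : ContinuousAt Real.log (x / μ') :=
      Real.continuousAt_log (by positivity)
    exact hcont.tendsto.comp (hy.div_const μ')
  have hT3 : Tendsto (fun n : ℕ => (1 + Real.log (k n)) / n) atTop (𝓝 0) := by
    have hup := log_div_aux x hx
    have h1n : Tendsto (fun n : ℕ => (1 : ℝ) / n) atTop (𝓝 0) :=
      tendsto_one_div_atTop_nhds_zero_nat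
    have hsq : Tendsto (fun n : ℕ => 1 / (n:ℝ) + Real.log ((n:ℝ) * x + 1) / n)
        atTop (𝓝 (0 + 0)) := h1n.add hup
    rw [add_zero] at hsq
    apply squeeze_zero_norm' _ hsq
    filter_upwards [hub, hk1, eventually_ge_atTop 1] with n hubn hk1n hn1
    have hn1' : (1:ℝ) ≤ (n:ℝ) := by exact_mod_cast hn1
    have hk1' : (1:ℝ) ≤ (k n : ℝ) := by exact_mod_cast hk1n
    have hlogk : 0 ≤ Real.log (k n) := Real.log_nonneg hk1'
    have hlogle : Real.log (k n) ≤ Real.log ((n:ℝ) * x + 1) :=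
      Real.log_le_log (by linarith) hubn
    rw [Real.norm_eq_abs, abs_of_nonneg (by positivity)]
    rw [add_div]
    gcongr
  have hGlim : Tendsto G atTop (𝓝 (-(x * Real.log (x / μ') - x + μ'))) := by
    have : Tendsto (fun n : ℕ => -μ' - ((k n : ℝ) / n) * Real.log (((k n : ℝ) / n) / μ')
        + (k n : ℝ) / n - (1 + Real.log (k n)) / n) atTop
        (𝓝 (-μ' - x * Real.log (x / μ') + x - 0)) := by
      exact (((tendsto_const_nhds.sub hT2).add hy).sub hT3)
    convert this using 2
    ring
  have hGc : ∀ᶠ n : ℕ in atTop, -c < G n :=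
    hGlim.eventually_const_lt (by linarith)
  filter_upwards [hGc, hk1, eventually_ge_atTop 1] with n hGn hk1n hn1
  have hn1' : (1:ℝ) ≤ (n:ℝ) := by exact_mod_cast hn1
  have hnpos : (0:ℝ) < n := by linarith
  have hk1' : (1:ℝ) ≤ (k n : ℝ) := by exact_mod_cast hk1n
  have hkpos : (0:ℝ) < (k n : ℝ) := by linarith
  set K := (k n : ℝ)
  set N := (n : ℝ)
  have hlam : (0:ℝ) < N * μ' := by positivity
  have hcpq_pos : 0 < cpq (N * μ') (k n) := cpq_pos hlam _
  rw [← Real.le_log_iff_exp_le hcpq_pos]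
  -- expand log cpq
  have hfacpos : (0:ℝ) < (Nat.factorial (k n) : ℝ) := by
    exact_mod_cast Nat.factorial_pos (k n)
  have hlogcpq : Real.log (cpq (N * μ') (k n))
      = -(N * μ') + K * Real.log (N * μ') - Real.log (Nat.factorial (k n)) := by
    unfold cpq
    rw [Real.log_div (by positivity) (ne_of_gt hfacpos), Real.log_mul
      (Real.exp_ne_zero _) (by positivity), Real.log_exp, Real.log_pow]
  have hfact : Real.log (Nat.factorial (k n)) ≤ 1 + Real.log K + K * (Real.log K - 1) := by
    have hb := factorial_le_stirling (k n) hk1n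
    have := Real.log_le_log hfacpos hb
    refine this.trans_eq ?_
    rw [Real.log_mul (by positivity) (by positivity), Real.log_mul
      (Real.exp_ne_zero _) (ne_of_gt hkpos), Real.log_pow, Real.log_div
      (ne_of_gt hkpos) (Real.exp_ne_zero _), Real.log_exp]
  -- relate N * G n to log cpq
  have hlogs : Real.log ((K / N) / μ') = Real.log K - Real.log N - Real.log μ' := by
    rw [Real.log_div (by positivity) (ne_of_gt hμ), Real.log_div (ne_of_gt hkpos)
      (ne_of_gt hnpos)]
  have hlam_log : Real.log (N * μ') = Real.log N + Real.log μ' :=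
    Real.log_mul (ne_of_gt hnpos) (ne_of_gt hμ)
  have hNG : N * G n ≤ Real.log (cpq (N * μ') (k n)) := by
    rw [hlogcpq, hG]
    simp only [hlogs, hlam_log]
    have expand : N * (-μ' - K / N * (Real.log K - Real.log N - Real.log μ') + K / N
        - (1 + Real.log K) / N)
        = -(N * μ') - K * (Real.log K - Real.log N - Real.log μ') + K - 1 - Real.log K := by
      field_simp
      ring
    change N * (-μ' - K / N * Real.log (K / N / μ') + K / N - (1 + Real.log K) / N) ≤ _
    rw [hlogs, expand]
    have : -(Real.log (Nat.factorial (k n))) ≥ -(1 + Real.log K + K * (Real.log K - 1)) := by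
      linarith
    nlinarith [this]
  calc -c * N ≤ G n * N := by
        have := le_of_lt hGn
        nlinarith
    _ = N * G n := by ring
    _ ≤ _ := hNG

lemma cpq_conv (l1 l2 : ℝ) (m : ℕ) :
    ∑ p ∈ Finset.HasAntidiagonal.antidiagonal m, cpq l1 p.1 * cpq l2 p.2 = cpq (l1 + l2) m := by
  rw [Finset.Nat.sum_antidiagonal_eq_sum_range_succ (fun a b => cpq l1 a * cpq l2 b)]
  unfold cpq
  rw [neg_add, Real.exp_add, add_pow]
  rw [Finset.mul_sum, Finset.sum_div]
  apply Finset.sum_congr rfl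
  intro k hk
  have hkm : k ≤ m := Nat.lt_succ_iff.mp (Finset.mem_range.mp hk)
  have hchoose : (Nat.choose m k : ℝ) * (Nat.factorial k) * (Nat.factorial (m - k))
      = (Nat.factorial m) := by
    exact_mod_cast congrArg (Nat.cast : ℕ → ℝ)
      (Nat.choose_mul_factorial_mul_factorial hkm)
  have hk0 : (Nat.factorial k : ℝ) ≠ 0 := by positivity
  have hmk0 : (Nat.factorial (m - k) : ℝ) ≠ 0 := by positivity
  have hm0 : (Nat.factorial m : ℝ) ≠ 0 := by positivity
  field_simp
  linear_combination (-(l1 ^ k * l2 ^ (m - k))) * hchoose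


section Law

variable {Ω : Type*} [MeasurableSpace Ω] {P : Measure Ω} [IsProbabilityMeasure P]
    {μ : ℝ≥0} {X : ℕ → Ω → ℕ}

lemma law_single (hXmeas : ∀ i, Measurable (X i))
    (hlaw : ∀ i, Measure.map (X i) P = (poissonPMF μ).toMeasure) (i j : ℕ) :
    P {ω | X i ω = j} = ENNReal.ofReal (cpq (μ : ℝ) j) := by
  have h1 : P {ω | X i ω = j} = Measure.map (X i) P {j} := by
    rw [Measure.map_apply (hXmeas i) (measurableSet_singleton j)]
    rfl
  rw [h1, hlaw i, PMF.toMeasure_apply_singleton _ _ (measurableSet_singleton j)]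
  rfl

lemma law_sum (hXmeas : ∀ i, Measurable (X i))
    (hiid : iIndepFun X P)
    (hlaw : ∀ i, Measure.map (X i) P = (poissonPMF μ).toMeasure) : ∀ n k : ℕ,
    P {ω | (∑ i ∈ Finset.range n, X i ω) = k} = ENNReal.ofReal (cpq ((n : ℝ) * μ) k) := by
  intro n
  induction n with
  | zero =>
    intro k
    simp only [Finset.range_zero, Finset.sum_empty, Nat.cast_zero, zero_mul]
    cases k with
    | zero =>
      rw [show {ω : Ω | (0:ℕ) = 0} = Set.univ from by ext ω; simp, measure_univ]
      unfold cpq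
      norm_num
    | succ k =>
      rw [show {ω : Ω | (0:ℕ) = k + 1} = (∅ : Set Ω) from by ext ω; simp, measure_empty]
      unfold cpq
      simp
  | succ n ih =>
    intro m
    have hmeasS : Measurable (fun ω => ∑ i ∈ Finset.range n, X i ω) := by
      exact Finset.measurable_sum _ (fun i _ => hXmeas i)
    have hindep : IndepFun (∑ i ∈ Finset.range n, X i) (X n) P :=
      hiid.indepFun_finset_sum_of_notMem hXmeas (Finset.notMem_range_self)
    have hev : {ω | (∑ i ∈ Finset.range (n+1), X i ω) = m}
        = ⋃ p ∈ Finset.HasAntidiagonal.antidiagonal m,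
            ({ω | (∑ i ∈ Finset.range n, X i ω) = p.1} ∩ {ω | X n ω = p.2}) := by
      ext ω
      simp only [Set.mem_setOf_eq, Set.mem_iUnion, Set.mem_inter_iff,
        Finset.HasAntidiagonal.mem_antidiagonal, Finset.sum_range_succ]
      constructor
      · intro h
        exact ⟨(∑ i ∈ Finset.range n, X i ω, X n ω), h, rfl, rfl⟩
      · rintro ⟨⟨a, b⟩, hab, h1, h2⟩
        simp only at h1 h2
        rw [h1, h2]; exact hab
    rw [hev, measure_biUnion_finset]
    · have : ∀ p ∈ Finset.HasAntidiagonal.antidiagonal m,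
          P ({ω | (∑ i ∈ Finset.range n, X i ω) = p.1} ∩ {ω | X n ω = p.2})
          = ENNReal.ofReal (cpq ((n : ℝ) * μ) p.1 * cpq (μ : ℝ) p.2) := by
        intro p _
        have hmul := hindep.measure_inter_preimage_eq_mul {p.1} {p.2}
          (measurableSet_singleton _) (measurableSet_singleton _)
        have heq : ((∑ i ∈ Finset.range n, X i) ⁻¹' {p.1} ∩ X n ⁻¹' {p.2})
            = ({ω | (∑ i ∈ Finset.range n, X i ω) = p.1} ∩ {ω | X n ω = p.2}) := by
          ext ω; simp [Finset.sum_apply]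
        have h1 : (∑ i ∈ Finset.range n, X i) ⁻¹' {p.1}
            = {ω | (∑ i ∈ Finset.range n, X i ω) = p.1} := by
          ext ω; simp [Finset.sum_apply]
        have h2 : X n ⁻¹' {p.2} = {ω | X n ω = p.2} := rfl
        rw [heq, h1, h2] at hmul
        rw [hmul, ih p.1, law_single hXmeas hlaw n p.2,
          ← ENNReal.ofReal_mul (cpq_nonneg (by positivity) p.1)]
      rw [Finset.sum_congr rfl this, ← ENNReal.ofReal_sum_of_nonneg
        (fun p _ => mul_nonneg (cpq_nonneg (by positivity) _) (cpq_nonneg (by positivity) _)),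
        cpq_conv]
      congr 1
      push_cast
      ring
    · intro p hp q hq hpq
      simp only [Function.onFun]
      apply Set.disjoint_left.mpr
      rintro ω ⟨h1, h2⟩ ⟨h3, h4⟩
      apply hpq
      have ha : p.1 = q.1 := by
        simp only [Set.mem_setOf_eq] at h1 h3
        rw [← h1, ← h3]
      have hb : p.2 = q.2 := by
        simp only [Set.mem_setOf_eq] at h2 h4
        rw [← h2, ← h4]
      exact Prod.ext ha hb
    · intro p _
      exact (hmeasS (measurableSet_singleton p.1)).inter
        ((hXmeas n) (measurableSet_singleton p.2))

end Law

section Master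

variable {Ω : Type*} [MeasurableSpace Ω] {P : Measure Ω} [IsProbabilityMeasure P]
    {μ : ℝ≥0} {X : ℕ → Ω → ℕ}

lemma law_event (hXmeas : ∀ i, Measurable (X i))
    (hiid : iIndepFun X P)
    (hlaw : ∀ i, Measure.map (X i) P = (poissonPMF μ).toMeasure)
    (n : ℕ) (F : Set ℝ) :
    P {ω | (∑ i ∈ Finset.range n, (X i ω : ℝ)) / n ∈ F}
      = ENNReal.ofReal (∑' k : {k : ℕ | (k : ℝ) / n ∈ F}, cpq ((n : ℝ) * μ) k) := by
  classical
  set A : Set ℕ := {k : ℕ | (k : ℝ) / n ∈ F} with hA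
  have hev : {ω | (∑ i ∈ Finset.range n, (X i ω : ℝ)) / n ∈ F}
      = (fun ω => ∑ i ∈ Finset.range n, X i ω) ⁻¹' A := by
    ext ω
    simp only [Set.mem_setOf_eq, Set.mem_preimage, hA]
    rw [Nat.cast_sum]
  rw [hev]
  have hmeasS : Measurable (fun ω => ∑ i ∈ Finset.range n, X i ω) :=
    Finset.measurable_sum _ (fun i _ => hXmeas i)
  rw [← tsum_measure_preimage_singleton (Set.to_countable A)
    (fun y _ => hmeasS (measurableSet_singleton y))]
  rw [ENNReal.ofReal_tsum_of_nonneg (f := fun k : A => cpq ((n : ℝ) * μ) k) (fun k => cpq_nonneg (by positivity) _)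
    (((cpq_summable _)).subtype A)]
  apply tsum_congr
  intro k
  have : (fun ω => ∑ i ∈ Finset.range n, X i ω) ⁻¹' {(k : ℕ)}
      = {ω | (∑ i ∈ Finset.range n, X i ω) = (k : ℕ)} := rfl
  rw [this, law_sum hXmeas hiid hlaw n k]

end Master

lemma tsum_subtype_union_le {f : ℕ → ℝ} (hf : Summable f) (hnn : ∀ k, 0 ≤ f k)
    (s u v : Set ℕ) (hsub : s ⊆ u ∪ v) :
    ∑' k : s, f k ≤ (∑' k : u, f k) + ∑' k : v, f k := by
  rw [tsum_subtype s f, tsum_subtype u f, tsum_subtype v f]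
  have hle : ∀ k, s.indicator f k ≤ u.indicator f k + v.indicator f k := by
    intro k
    by_cases hk : k ∈ s
    · rcases hsub hk with h | h
      · rw [Set.indicator_of_mem hk, Set.indicator_of_mem h]
        have := Set.indicator_nonneg (fun k _ => hnn k) (a := k) (s := v)
        linarith
      · rw [Set.indicator_of_mem hk, Set.indicator_of_mem h]
        have := Set.indicator_nonneg (fun k _ => hnn k) (a := k) (s := u)
        linarith
    · rw [Set.indicator_of_notMem hk]
      have h1 := Set.indicator_nonneg (fun k _ => hnn k) (a := k) (s := u)
      have h2 := Set.indicator_nonneg (fun k _ => hnn k) (a := k) (s := v)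
      linarith
  exact (Summable.tsum_le_tsum hle (hf.indicator s) ((hf.indicator u).add (hf.indicator v))).trans
    (Summable.tsum_add (hf.indicator u) (hf.indicator v)).le

/-- Cramér's theorem for i.i.d. Poisson(μ) random variables, with rate function
`I(x) = x log(x/μ) − x + μ` for `x ≥ 0` (so `I(0) = μ`) and `I(x) = ∞` for `x < 0`:
the empirical means satisfy the large deviation upper bound over closed sets and the
lower bound over open sets. The bounds `limsup (1/n) log P ≤ −inf_F I` and
`liminf (1/n) log P ≥ −inf_G I` are stated in the equivalent eventual-exponential
form. -/
theorem cramer_poisson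
    {Ω : Type*} [MeasurableSpace Ω] (P : Measure Ω) [IsProbabilityMeasure P]
    (μ : ℝ≥0) (hμ : 0 < μ)
    (X : ℕ → Ω → ℕ) (hXmeas : ∀ i, Measurable (X i))
    (hiid : iIndepFun X P)
    (hlaw : ∀ i, Measure.map (X i) P = (poissonPMF μ).toMeasure) :
    (∀ F : Set ℝ, IsClosed F → ∀ c : ℝ,
      ENNReal.ofReal c < (⨅ x ∈ F, if x < 0 then (⊤ : ℝ≥0∞) else
          ENNReal.ofReal (x * Real.log (x / μ) - x + μ)) →
      ∀ᶠ n : ℕ in atTop,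
        (P {ω | (∑ i ∈ Finset.range n, (X i ω : ℝ)) / n ∈ F}).toReal
          ≤ Real.exp (-c * n)) ∧
    (∀ G : Set ℝ, IsOpen G → ∀ c : ℝ,
      (⨅ x ∈ G, if x < 0 then (⊤ : ℝ≥0∞) else
          ENNReal.ofReal (x * Real.log (x / μ) - x + μ)) < ENNReal.ofReal c →
      ∀ᶠ n : ℕ in atTop,
        Real.exp (-c * n)
          ≤ (P {ω | (∑ i ∈ Finset.range n, (X i ω : ℝ)) / n ∈ G}).toReal) := by
  have hμ' : (0:ℝ) < (μ : ℝ) := by exact_mod_cast hμ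
  have master : ∀ (n : ℕ) (F : Set ℝ),
      (P {ω | (∑ i ∈ Finset.range n, (X i ω : ℝ)) / n ∈ F}).toReal
        = ∑' k : {k : ℕ | (k : ℝ) / n ∈ F}, cpq ((n : ℝ) * μ) k := by
    intro n F
    rw [law_event hXmeas hiid hlaw n F, ENNReal.toReal_ofReal
      (tsum_nonneg (fun k => cpq_nonneg (by positivity) _))]
  constructor
  · -- upper bound
    intro F hF c hc
    by_cases hc0 : c ≤ 0
    · filter_upwards with n
      have h1 : (P {ω | (∑ i ∈ Finset.range n, (X i ω : ℝ)) / n ∈ F}).toReal ≤ 1 := by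
        rw [← ENNReal.toReal_one]
        exact ENNReal.toReal_mono ENNReal.one_ne_top prob_le_one
      have h2 : (1:ℝ) ≤ Real.exp (-c * n) := by
        apply Real.one_le_exp
        have : (0:ℝ) ≤ (n:ℝ) := Nat.cast_nonneg n
        nlinarith
      linarith
    push_neg at hc0
    have key : ∀ x ∈ F, 0 ≤ x → c < x * Real.log (x / μ) - x + μ := by
      intro x hxF hx0
      have h := hc.trans_le (iInf₂_le x hxF)
      rw [if_neg (not_lt.mpr hx0)] at h
      exact (ENNReal.ofReal_lt_ofReal_iff_of_nonneg hc0.le).mp h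
    have hup : ∃ ε : ℝ, c < ε ∧ ∀ n : ℕ, 1 ≤ n →
        (∑' j : {j : ℕ | (j:ℝ)/n ∈ F ∧ (μ:ℝ) ≤ (j:ℝ)/n}, cpq ((n:ℝ) * μ) j)
          ≤ Real.exp (-(ε * n)) := by
      by_cases hAne : (F ∩ Set.Ici (μ:ℝ)).Nonempty
      · set a := sInf (F ∩ Set.Ici (μ:ℝ)) with ha
        have haA : a ∈ F ∩ Set.Ici (μ:ℝ) :=
          IsClosed.csInf_mem (hF.inter isClosed_Ici) hAne ⟨(μ:ℝ), fun y hy => hy.2⟩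
        have haμ : (μ:ℝ) ≤ a := haA.2
        have hapos : (0:ℝ) < a := lt_of_lt_of_le hμ' haμ
        have hIa : c < a * Real.log (a / μ) - a + μ := key a haA.1 hapos.le
        refine ⟨a * Real.log (a / μ) - a + μ, hIa, fun n hn => ?_⟩
        have hn' : (1:ℝ) ≤ (n:ℝ) := by exact_mod_cast hn
        have hnpos : (0:ℝ) < (n:ℝ) := by linarith
        have ht0 : 0 ≤ Real.log (a / μ) :=
          Real.log_nonneg ((one_le_div hμ').mpr haμ)
        have hcond : ∀ j ∈ {j : ℕ | (j:ℝ)/n ∈ F ∧ (μ:ℝ) ≤ (j:ℝ)/n},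
            0 ≤ Real.log (a / μ) * j - Real.log (a / μ) * ((n:ℝ) * a) := by
          intro j hj
          have hjA : (j:ℝ)/n ∈ F ∩ Set.Ici (μ:ℝ) := ⟨hj.1, hj.2⟩
          have hja : a ≤ (j:ℝ)/n := csInf_le ⟨(μ:ℝ), fun y hy => hy.2⟩ hjA
          have hjn : (n:ℝ) * a ≤ (j:ℝ) := by
            rw [← le_div_iff₀' hnpos]
            exact hja
          nlinarith
        have hch := cpq_tsum_subtype_le_exp (lam := (n:ℝ) * μ) (by positivity)
          {j : ℕ | (j:ℝ)/n ∈ F ∧ (μ:ℝ) ≤ (j:ℝ)/n} ((n:ℝ) * a) (Real.log (a / μ)) hcond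
        refine hch.trans_eq ?_
        congr 1
        rw [Real.exp_log (by positivity : (0:ℝ) < a / μ)]
        field_simp
        ring
      · refine ⟨c + 1, by linarith, fun n hn => ?_⟩
        have hempty : {j : ℕ | (j:ℝ)/n ∈ F ∧ (μ:ℝ) ≤ (j:ℝ)/n} = (∅ : Set ℕ) := by
          rw [Set.eq_empty_iff_forall_notMem]
          rintro j ⟨h1, h2⟩
          exact hAne ⟨(j:ℝ)/n, h1, h2⟩
        rw [hempty]
        rw [tsum_empty]
        exact (Real.exp_pos _).le
    have hdown : ∃ ε : ℝ, c < ε ∧ ∀ n : ℕ, 1 ≤ n →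
        (∑' j : {j : ℕ | (j:ℝ)/n ∈ F ∧ (j:ℝ)/n ≤ (μ:ℝ)}, cpq ((n:ℝ) * μ) j)
          ≤ Real.exp (-(ε * n)) := by
      by_cases hBne : (F ∩ Set.Icc 0 (μ:ℝ)).Nonempty
      · set b := sSup (F ∩ Set.Icc 0 (μ:ℝ)) with hb
        have hbB : b ∈ F ∩ Set.Icc 0 (μ:ℝ) :=
          IsClosed.csSup_mem (hF.inter isClosed_Icc) hBne ⟨(μ:ℝ), fun y hy => hy.2.2⟩
        have hb0 : 0 ≤ b := hbB.2.1
        have hbμ : b ≤ (μ:ℝ) := hbB.2.2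
        have hIb : c < b * Real.log (b / μ) - b + μ := key b hbB.1 hb0
        rcases eq_or_lt_of_le hb0 with hb0' | hbpos
        · -- b = 0
          have hcμ : c < (μ:ℝ) := by
            rw [← hb0'] at hIb
            simpa using hIb
          set t := Real.log (((μ:ℝ) - c) / (2 * μ)) with htdef
          have het : Real.exp t = ((μ:ℝ) - c) / (2 * μ) :=
            Real.exp_log (div_pos (by linarith) (by positivity))
          refine ⟨((μ:ℝ) + c) / 2, by linarith, fun n hn => ?_⟩
          have hn' : (1:ℝ) ≤ (n:ℝ) := by exact_mod_cast hn
          have hnpos : (0:ℝ) < (n:ℝ) := by linarith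
          have hcond : ∀ j ∈ {j : ℕ | (j:ℝ)/n ∈ F ∧ (j:ℝ)/n ≤ (μ:ℝ)},
              0 ≤ t * j - t * ((n:ℝ) * 0) := by
            intro j hj
            have hj0 : (0:ℝ) ≤ (j:ℝ)/n := by positivity
            have hjB : (j:ℝ)/n ∈ F ∩ Set.Icc 0 (μ:ℝ) := ⟨hj.1, hj0, hj.2⟩
            have hjb : (j:ℝ)/n ≤ b := le_csSup ⟨(μ:ℝ), fun y hy => hy.2.2⟩ hjB
            have : (j:ℝ)/n = 0 := le_antisymm (hb0' ▸ hjb) hj0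
            have hj00 : j = 0 := by
              field_simp at this
              simpa using this
            subst hj00
            simp
          have hch := cpq_tsum_subtype_le_exp (lam := (n:ℝ) * μ) (by positivity)
            {j : ℕ | (j:ℝ)/n ∈ F ∧ (j:ℝ)/n ≤ (μ:ℝ)} ((n:ℝ) * 0) t hcond
          refine hch.trans ?_
          apply le_of_eq
          congr 1
          rw [het]
          field_simp
          ring
        · -- b > 0
          set t := Real.log (b / μ) with htdef
          have het : Real.exp t = b / μ := Real.exp_log (by positivity)
          have ht0 : t ≤ 0 :=
            Real.log_nonpos (by positivity) ((div_le_one hμ').mpr hbμ)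
          refine ⟨b * Real.log (b / μ) - b + μ, hIb, fun n hn => ?_⟩
          have hn' : (1:ℝ) ≤ (n:ℝ) := by exact_mod_cast hn
          have hnpos : (0:ℝ) < (n:ℝ) := by linarith
          have hcond : ∀ j ∈ {j : ℕ | (j:ℝ)/n ∈ F ∧ (j:ℝ)/n ≤ (μ:ℝ)},
              0 ≤ t * j - t * ((n:ℝ) * b) := by
            intro j hj
            have hj0 : (0:ℝ) ≤ (j:ℝ)/n := by positivity
            have hjB : (j:ℝ)/n ∈ F ∩ Set.Icc 0 (μ:ℝ) := ⟨hj.1, hj0, hj.2⟩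
            have hjb : (j:ℝ)/n ≤ b := le_csSup ⟨(μ:ℝ), fun y hy => hy.2.2⟩ hjB
            have hjn : (j:ℝ) ≤ (n:ℝ) * b := by
              rw [← div_le_iff₀' hnpos]
              exact hjb
            nlinarith
          have hch := cpq_tsum_subtype_le_exp (lam := (n:ℝ) * μ) (by positivity)
            {j : ℕ | (j:ℝ)/n ∈ F ∧ (j:ℝ)/n ≤ (μ:ℝ)} ((n:ℝ) * b) t hcond
          refine hch.trans_eq ?_
          congr 1
          rw [het, htdef]
          field_simp
          ring
      · refine ⟨c + 1, by linarith, fun n hn => ?_⟩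
        have hn' : (1:ℝ) ≤ (n:ℝ) := by exact_mod_cast hn
        have hnpos : (0:ℝ) < (n:ℝ) := by linarith
        have hempty : {j : ℕ | (j:ℝ)/n ∈ F ∧ (j:ℝ)/n ≤ (μ:ℝ)} = (∅ : Set ℕ) := by
          rw [Set.eq_empty_iff_forall_notMem]
          rintro j ⟨h1, h2⟩
          have hj0 : (0:ℝ) ≤ (j:ℝ)/n := by positivity
          exact hBne ⟨(j:ℝ)/n, h1, hj0, h2⟩
        rw [hempty]
        rw [tsum_empty]
        exact (Real.exp_pos _).le
    obtain ⟨ε₁, hε₁, hupf⟩ := hup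
    obtain ⟨ε₂, hε₂, hdownf⟩ := hdown
    set ε := min ε₁ ε₂ with hε
    have hεc : c < ε := lt_min hε₁ hε₂
    have h2exp : ∀ᶠ n : ℕ in atTop, 2 * Real.exp (-(ε * n)) ≤ Real.exp (-c * n) := by
      have htend : Tendsto (fun n : ℕ => Real.exp ((ε - c) * n)) atTop atTop := by
        apply Real.tendsto_exp_atTop.comp
        exact Tendsto.const_mul_atTop (by linarith) tendsto_natCast_atTop_atTop
      filter_upwards [htend.eventually_ge_atTop 2] with n hn
      rw [show (-c * n : ℝ) = (ε - c) * n + (-(ε * n)) by ring, Real.exp_add]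
      exact mul_le_mul_of_nonneg_right hn (Real.exp_nonneg _)
    filter_upwards [h2exp, eventually_ge_atTop 1] with n h2n hn1
    rw [master n F]
    have hn' : (1:ℝ) ≤ (n:ℝ) := by exact_mod_cast hn1
    have hnpos : (0:ℝ) < (n:ℝ) := by linarith
    have hsplit := tsum_subtype_union_le (cpq_summable ((n:ℝ) * μ))
      (fun j => cpq_nonneg (by positivity) j)
      {k : ℕ | (k:ℝ)/n ∈ F}
      {j : ℕ | (j:ℝ)/n ∈ F ∧ (j:ℝ)/n ≤ (μ:ℝ)}
      {j : ℕ | (j:ℝ)/n ∈ F ∧ (μ:ℝ) ≤ (j:ℝ)/n}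
      (by
        intro j hj
        rcases le_total ((j:ℝ)/n) (μ:ℝ) with h | h
        · exact Or.inl ⟨hj, h⟩
        · exact Or.inr ⟨hj, h⟩)
    refine hsplit.trans ?_
    have hd := hdownf n hn1
    have hu := hupf n hn1
    have hεd : Real.exp (-(ε₂ * n)) ≤ Real.exp (-(ε * n)) := by
      apply Real.exp_le_exp.mpr
      have : ε ≤ ε₂ := min_le_right _ _
      nlinarith
    have hεu : Real.exp (-(ε₁ * n)) ≤ Real.exp (-(ε * n)) := by
      apply Real.exp_le_exp.mpr
      have : ε ≤ ε₁ := min_le_left _ _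
      nlinarith
    calc (∑' j : {j : ℕ | (j:ℝ)/n ∈ F ∧ (j:ℝ)/n ≤ (μ:ℝ)}, cpq ((n:ℝ) * μ) j)
          + ∑' j : {j : ℕ | (j:ℝ)/n ∈ F ∧ (μ:ℝ) ≤ (j:ℝ)/n}, cpq ((n:ℝ) * μ) j
        ≤ Real.exp (-(ε * n)) + Real.exp (-(ε * n)) := by
          have := hd.trans hεd
          have := hu.trans hεu
          linarith [hd.trans hεd, hu.trans hεu]
      _ = 2 * Real.exp (-(ε * n)) := by ring
      _ ≤ Real.exp (-c * n) := h2n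
  · -- lower bound
    intro G hG c hc
    obtain ⟨x, hx⟩ := iInf_lt_iff.mp hc
    obtain ⟨hxG, hfx⟩ := iInf_lt_iff.mp hx
    have hx0 : ¬ x < 0 := by
      intro h
      rw [if_pos h] at hfx
      exact (not_top_lt hfx)
    rw [if_neg hx0] at hfx
    push_neg at hx0
    have hc0 : 0 < c := by
      by_contra hle
      push_neg at hle
      rw [ENNReal.ofReal_eq_zero.mpr hle] at hfx
      exact (not_lt_bot hfx)
    have hIx : x * Real.log (x / μ) - x + μ < c := by
      by_contra hle
      push_neg at hle
      exact absurd (ENNReal.ofReal_le_ofReal hle) (not_le.mpr hfx)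
    rcases eq_or_lt_of_le hx0 with hx0' | hxpos
    · -- x = 0 case
      have h0G : (0:ℝ) ∈ G := by rwa [← hx0'] at hxG
      have hμc : (μ:ℝ) < c := by
        rw [← hx0'] at hIx
        simpa using hIx
      filter_upwards [eventually_ge_atTop 0] with n _
      rw [master n G]
      have h0mem : (0:ℕ) ∈ {k : ℕ | (k : ℝ) / n ∈ G} := by
        simp only [Set.mem_setOf_eq, Nat.cast_zero, zero_div]
        exact h0G
      have hle : Real.exp (-c * n) ≤ cpq ((n:ℝ) * μ) 0 := by
        unfold cpq
        simp only [pow_zero, Nat.factorial_zero, Nat.cast_one, mul_one, div_one]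
        apply Real.exp_le_exp.mpr
        have : (0:ℝ) ≤ (n:ℝ) := Nat.cast_nonneg n
        nlinarith
      refine hle.trans ?_
      exact Summable.le_tsum ((cpq_summable _).subtype _) ⟨0, h0mem⟩
        (fun k _ => cpq_nonneg (by positivity) _)
    · -- x > 0 case
      obtain ⟨δ, hδ, hball⟩ := Metric.isOpen_iff.mp hG x hxG
      set k : ℕ → ℕ := fun n => ⌈(n:ℝ) * x⌉₊ with hk
      have hlb : ∀ n : ℕ, (n:ℝ) * x ≤ k n := fun n => Nat.le_ceil _
      have hub' : ∀ n : ℕ, (k n : ℝ) < (n:ℝ) * x + 1 :=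
        fun n => Nat.ceil_lt_add_one (by positivity)
      have hy : Tendsto (fun n : ℕ => (k n : ℝ) / n) atTop (𝓝 x) := by
        have h1n : Tendsto (fun n : ℕ => (1 : ℝ) / n) atTop (𝓝 0) :=
          tendsto_one_div_atTop_nhds_zero_nat
        have hf0 : Tendsto (fun n : ℕ => (k n : ℝ) / n - x) atTop (𝓝 0) := by
          apply squeeze_zero_norm' _ h1n
          filter_upwards [eventually_ge_atTop 1] with n hn
          have hn' : (1:ℝ) ≤ (n:ℝ) := by exact_mod_cast hn
          have hnpos : (0:ℝ) < n := by linarith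
          rw [Real.norm_eq_abs, abs_le]
          constructor
          · have := hlb n
            have h2 : x ≤ (k n : ℝ) / n := by
              rw [le_div_iff₀ hnpos]; linarith [hlb n]
            have h3 : (0:ℝ) < 1 / n := by positivity
            linarith
          · have h2 : (k n : ℝ) / n ≤ x + 1 / n := by
              rw [div_le_iff₀ hnpos]
              have := hub' n
              have : (k n : ℝ) ≤ n * x + 1 := by linarith
              calc (k n : ℝ) ≤ (n:ℝ) * x + 1 := this
                _ = (x + 1/n) * n := by field_simp
            linarith
        have := hf0.add (tendsto_const_nhds (x := x))
        rw [zero_add] at this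
        refine this.congr fun n => by ring
      have hub : ∀ᶠ n : ℕ in atTop, (k n : ℝ) ≤ (n:ℝ) * x + 1 :=
        Eventually.of_forall fun n => (hub' n).le
      have hk1 : ∀ᶠ n : ℕ in atTop, 1 ≤ k n := by
        filter_upwards [eventually_ge_atTop 1] with n hn
        have hn' : (1:ℝ) ≤ (n:ℝ) := by exact_mod_cast hn
        have : (0:ℝ) < (n:ℝ) * x := by positivity
        exact Nat.ceil_pos.mpr this
      have hmain := cpq_lower_eventually (μ:ℝ) x c hμ' hxpos hIx k hy hub hk1
      have hmem : ∀ᶠ n : ℕ in atTop, (k n : ℝ) / n ∈ G := by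
        have hδn : ∀ᶠ n : ℕ in atTop, (1:ℝ) / n < δ := by
          have h0 : Tendsto (fun n : ℕ => (1:ℝ)/n) atTop (𝓝 0) :=
            tendsto_one_div_atTop_nhds_zero_nat
          exact h0.eventually_lt_const hδ
        filter_upwards [hδn, eventually_ge_atTop 1] with n h1 hn
        apply hball
        rw [Metric.mem_ball, Real.dist_eq, abs_lt]
        have hn' : (1:ℝ) ≤ (n:ℝ) := by exact_mod_cast hn
        have hnpos : (0:ℝ) < n := by linarith
        constructor
        · have h2 : x ≤ (k n : ℝ) / n := by
            rw [le_div_iff₀ hnpos]; linarith [hlb n]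
          linarith
        · have h2 : (k n : ℝ) / n < x + 1 / n := by
            rw [div_lt_iff₀ hnpos]
            have := hub' n
            calc (k n : ℝ) < (n:ℝ) * x + 1 := this
              _ = (x + 1/n) * n := by field_simp
          linarith
      filter_upwards [hmain, hmem] with n h1 h2
      rw [master n G]
      have hkmem : k n ∈ {j : ℕ | (j : ℝ) / n ∈ G} := h2
      refine h1.trans ?_
      exact Summable.le_tsum ((cpq_summable _).subtype _) ⟨k n, hkmem⟩
        (fun j _ => cpq_nonneg (by positivity) _)
end

section
/- Let E be a compact metric space and τ a finite Borel measure on E. For each ℓ ≥ 1 choose a compact Γ_ℓ ⊆ E with τ(E∖Γ_ℓ) ≤ ℓ/(e^{2ℓ²} − 1), and set K_ℓ := {ν ∈ M_+(E) : ν(E∖Γ_ℓ) ≤ 1/ℓ, ν(E) ≤ ℓ} and L_m := ∩_{ℓ≥m} K_ℓ. Then each L_m is compact in the weak topology on M_+(E), and if ζ_n = ρ_n^{-1} Σ_{ℓ=1}^{ρ_n} ζ^{(ℓ)} with (ζ^{(ℓ)}) i.i.d. Poisson random measures of intensity τ, then limsup_n (1/ρ_n) log P(ζ_n ∉ L_m)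 ≤ −(m − τ(E)(e − 1)); hence (ζ_n) is exponentially tight in M_+(E). -/
open MeasureTheory ProbabilityTheory Filter Real
open scoped NNReal ENNReal


namespace OldRiesz

section RieszAux
open BoundedContinuousFunction TopologicalSpace Set

variable {X : Type*} [MetricSpace X] [CompactSpace X]

/-- Urysohn function into `ℝ≥0`. -/
lemma urysohn_nnreal {s t : Set X} (hs : IsClosed s) (ht : IsClosed t) (hd : Disjoint s t) :
    ∃ g : X →ᵇ ℝ≥0, (∀ x ∈ s, g x = 0) ∧ (∀ x ∈ t, g x = 1) ∧ ∀ x, g x ≤ 1 := by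
  obtain ⟨g, hg0, hg1, hg01⟩ := exists_continuous_zero_one_of_isClosed hs ht hd
  refine ⟨mkOfCompact ⟨fun x => Real.toNNReal (g x), continuous_real_toNNReal.comp g.continuous⟩, ?_, ?_, ?_⟩
  · intro x hx
    simp [mkOfCompact_apply, hg0 hx]
  · intro x hx
    simp [mkOfCompact_apply, hg1 hx]
  · intro x
    simp only [mkOfCompact_apply, ContinuousMap.coe_mk]
    exact Real.toNNReal_le_one.mpr (hg01 x).2

variable (Λ : (X →ᵇ ℝ≥0) →ₗ[ℝ≥0] ℝ≥0)

/-- Riesz content for functionals on bounded continuous functions. -/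
noncomputable def rieszContentAux : Compacts X → ℝ≥0 := fun K =>
  sInf (Λ '' { f : X →ᵇ ℝ≥0 | ∀ x ∈ K, (1 : ℝ≥0) ≤ f x })

theorem rieszContentAux_image_nonempty (K : Compacts X) :
    (Λ '' { f : X →ᵇ ℝ≥0 | ∀ x ∈ K, (1 : ℝ≥0) ≤ f x }).Nonempty :=
  ⟨Λ 1, 1, fun _ _ => le_rfl, rfl⟩

theorem rieszContentAux_mono {K₁ K₂ : Compacts X} (h : K₁ ≤ K₂) :
    rieszContentAux Λ K₁ ≤ rieszContentAux Λ K₂ :=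
  csInf_le_csInf (OrderBot.bddBelow _) (rieszContentAux_image_nonempty Λ K₂)
    (Set.image_mono fun f hf x hx => hf x (h hx))

theorem rieszContentAux_le {K : Compacts X} {f : X →ᵇ ℝ≥0} (h : ∀ x ∈ K, (1 : ℝ≥0) ≤ f x) :
    rieszContentAux Λ K ≤ Λ f :=
  csInf_le (OrderBot.bddBelow _) ⟨f, ⟨h, rfl⟩⟩

theorem exists_lt_rieszContentAux_add_pos (K : Compacts X) {ε : ℝ≥0} (εpos : 0 < ε) :
    ∃ f : X →ᵇ ℝ≥0, (∀ x ∈ K, (1 : ℝ≥0) ≤ f x) ∧ Λ f < rieszContentAux Λ K + ε := by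
  obtain ⟨α, ⟨⟨f, f_hyp⟩, α_hyp⟩⟩ :=
    exists_lt_of_csInf_lt (rieszContentAux_image_nonempty Λ K)
      (lt_add_of_pos_right (rieszContentAux Λ K) εpos)
  refine ⟨f, f_hyp.left, ?_⟩
  rw [f_hyp.right]
  exact α_hyp

theorem rieszContentAux_sup_le (K1 K2 : Compacts X) :
    rieszContentAux Λ (K1 ⊔ K2) ≤ rieszContentAux Λ K1 + rieszContentAux Λ K2 := by
  apply _root_.le_of_forall_pos_le_add
  intro ε εpos
  obtain ⟨f1, f_test_function_K1⟩ := exists_lt_rieszContentAux_add_pos Λ K1 (half_pos εpos)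
  obtain ⟨f2, f_test_function_K2⟩ := exists_lt_rieszContentAux_add_pos Λ K2 (half_pos εpos)
  have f_test_function_union : ∀ x ∈ K1 ⊔ K2, (1 : ℝ≥0) ≤ (f1 + f2) x := by
    rintro x (x_in_K1 | x_in_K2)
    · exact le_add_right (f_test_function_K1.left x x_in_K1)
    · exact le_add_left (f_test_function_K2.left x x_in_K2)
  apply (rieszContentAux_le Λ f_test_function_union).trans (le_of_lt _)
  rw [map_add]
  apply lt_of_lt_of_le (_root_.add_lt_add f_test_function_K1.right f_test_function_K2.right)
    (le_of_eq _)
  rw [add_assoc, add_comm (ε / 2), add_assoc, add_halves ε, add_assoc]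

lemma lam_mono {f g : X →ᵇ ℝ≥0} (h : ∀ x, f x ≤ g x) : Λ f ≤ Λ g := by
  set d : X →ᵇ ℝ≥0 := mkOfCompact ⟨fun x => g x - f x, by fun_prop⟩ with hd
  have : f + d = g := by
    ext x
    simp only [coe_add, Pi.add_apply, hd, mkOfCompact_apply, ContinuousMap.coe_mk]
    rw [add_tsub_cancel_of_le (h x)]
  calc Λ f ≤ Λ f + Λ d := le_self_add
  _ = Λ (f + d) := (map_add Λ f d).symm
  _ = Λ g := by rw [this]

lemma lam_le_content {g : X →ᵇ ℝ≥0} {K : Compacts X} (hg1 : ∀ x, g x ≤ 1)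
    (hsupp : ∀ x, g x ≠ 0 → x ∈ (K : Set X)) : Λ g ≤ rieszContentAux Λ K := by
  apply le_csInf (rieszContentAux_image_nonempty Λ K)
  rintro b ⟨f, hf, rfl⟩
  apply lam_mono
  intro x
  by_cases hx : g x = 0
  · simp [hx]
  · exact le_trans (hg1 x) (hf x (hsupp x hx))

lemma lam_le_content_mul {g : X →ᵇ ℝ≥0} {K : Compacts X} (c : ℝ≥0) (hgc : ∀ x, g x ≤ c)
    (hsupp : ∀ x, g x ≠ 0 → x ∈ (K : Set X)) : Λ g ≤ c * rieszContentAux Λ K := by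
  rcases eq_or_ne c 0 with rfl | hc
  · have : g = 0 := by
      ext x; simpa using hgc x
    simp [this]
  · have h1 : ∀ x, (c⁻¹ • g) x ≤ 1 := by
      intro x
      simp only [coe_smul, Pi.smul_apply, smul_eq_mul]
      rw [← inv_mul_cancel₀ hc]
      exact mul_le_mul_right (hgc x) _
    have h2 : ∀ x, (c⁻¹ • g) x ≠ 0 → x ∈ (K : Set X) := by
      intro x hx
      apply hsupp
      intro h0
      simp [h0] at hx
    have := lam_le_content Λ h1 h2
    rw [_root_.map_smul, smul_eq_mul] at this
    calc Λ g = c * (c⁻¹ * Λ g) := by rw [← mul_assoc, mul_inv_cancel₀ hc, one_mul]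
    _ ≤ c * rieszContentAux Λ K := mul_le_mul_right this _

lemma rieszContentAux_sup_disjoint' (K₁ K₂ : Compacts X) (hd : Disjoint (K₁ : Set X) K₂) :
    rieszContentAux Λ (K₁ ⊔ K₂) = rieszContentAux Λ K₁ + rieszContentAux Λ K₂ := by
  refine le_antisymm (rieszContentAux_sup_le Λ K₁ K₂) ?_
  apply le_csInf (rieszContentAux_image_nonempty Λ (K₁ ⊔ K₂))
  rintro b ⟨f, hf, rfl⟩
  obtain ⟨g, hg0, hg1, hgle⟩ := urysohn_nnreal K₂.2.isClosed K₁.2.isClosed hd.symm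
  set f₁ : X →ᵇ ℝ≥0 := mkOfCompact ⟨fun x => f x * g x, by fun_prop⟩ with hf₁
  set f₂ : X →ᵇ ℝ≥0 := mkOfCompact ⟨fun x => f x * (1 - g x), by fun_prop⟩ with hf₂
  have hsum : f₁ + f₂ = f := by
    ext x
    simp only [coe_add, Pi.add_apply, hf₁, hf₂, mkOfCompact_apply, ContinuousMap.coe_mk]
    rw [← mul_add, add_tsub_cancel_of_le (hgle x), mul_one]
  have h₁ : rieszContentAux Λ K₁ ≤ Λ f₁ := by
    apply rieszContentAux_le
    intro x hx
    simp only [hf₁, mkOfCompact_apply, ContinuousMap.coe_mk, hg1 x hx, mul_one]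
    exact hf x (Or.inl hx)
  have h₂ : rieszContentAux Λ K₂ ≤ Λ f₂ := by
    apply rieszContentAux_le
    intro x hx
    simp only [hf₂, mkOfCompact_apply, ContinuousMap.coe_mk, hg0 x hx, tsub_zero, mul_one]
    exact hf x (Or.inr hx)
  calc rieszContentAux Λ K₁ + rieszContentAux Λ K₂ ≤ Λ f₁ + Λ f₂ := add_le_add h₁ h₂
  _ = Λ (f₁ + f₂) := (map_add Λ f₁ f₂).symm
  _ = Λ f := by rw [hsum]

/-- The Riesz content associated to a positive linear functional. -/
noncomputable def rieszContent : Content X where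
  toFun := rieszContentAux Λ
  mono' := fun _ _ h => rieszContentAux_mono Λ h
  sup_disjoint' := fun K₁ K₂ hd _ _ => rieszContentAux_sup_disjoint' Λ K₁ K₂ hd
  sup_le' := fun K₁ K₂ => rieszContentAux_sup_le Λ K₁ K₂

end RieszAux

section B
open BoundedContinuousFunction TopologicalSpace Set

lemma ennreal_le_of_forall_le_add_div {a b c : ℝ≥0∞} (hc : c ≠ ∞)
    (h : ∀ n : ℕ, 1 ≤ n → a ≤ b + c / n) : a ≤ b := by
  apply ENNReal.le_of_forall_pos_le_add
  intro ε hε _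
  set c' := c.toNNReal with hc'
  obtain ⟨n₀, hn₀⟩ := exists_nat_gt (c' / ε)
  set n := max n₀ 1 with hn
  have hn1 : 1 ≤ n := le_max_right _ _
  have hnn : (n : ℝ≥0) ≠ 0 := by positivity
  have hdiv : c' / (n : ℝ≥0) ≤ ε := by
    rw [div_le_iff₀ (by positivity)]
    have h1 : c' / ε < (n : ℝ≥0) := lt_of_lt_of_le hn₀ (by exact_mod_cast le_max_left _ _)
    rw [div_lt_iff₀ hε] at h1
    calc c' ≤ (n : ℝ≥0) * ε := h1.le
    _ = ε * n := mul_comm _ _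
  calc a ≤ b + c / n := h n hn1
  _ ≤ b + ε := by
      apply add_le_add_right
      rw [← ENNReal.coe_toNNReal hc, ← ENNReal.coe_natCast, ← ENNReal.coe_div hnn]
      exact_mod_cast hdiv

variable {X : Type*} [MetricSpace X] [CompactSpace X] [MeasurableSpace X] [BorelSpace X]
variable (Λ : (X →ᵇ ℝ≥0) →ₗ[ℝ≥0] ℝ≥0)

lemma riesz_measure_le_content (K : Compacts X) :
    (rieszContent Λ).measure K ≤ (rieszContentAux Λ K : ℝ≥0∞) := by
  apply ENNReal.le_of_forall_pos_le_add
  intro ε hε _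
  obtain ⟨f, hf1, hfΛ⟩ := exists_lt_rieszContentAux_add_pos Λ K (half_pos hε)
  set a := rieszContentAux Λ K with ha
  have hden : a + ε ≠ 0 := by positivity
  have hden2 : a + ε / 2 ≠ 0 := by positivity
  set t : ℝ≥0 := (a + ε / 2) / (a + ε) with hT
  have ht1 : t < 1 := by
    rw [hT, div_lt_one (by positivity)]
    exact add_lt_add_right (half_lt_self hε) a
  have htpos : 0 < t := by positivity
  have hKU : (K : Set X) ⊆ f ⁻¹' (Ioi t) := by
    intro x hx
    exact lt_of_lt_of_le ht1 (hf1 x hx)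
  have hUopen : IsOpen (f ⁻¹' (Ioi t)) := IsOpen.preimage f.continuous isOpen_Ioi
  have step1 : (rieszContent Λ).measure K ≤ (rieszContent Λ).innerContent ⟨_, hUopen⟩ := by
    have e1 : (rieszContent Λ).measure (K : Set X) = (rieszContent Λ).outerMeasure (K : Set X) :=
      Content.measure_apply _ K.2.isClosed.measurableSet
    rw [e1, Content.outerMeasure_eq_iInf]
    refine le_trans (iInf_le _ (⇑f ⁻¹' Ioi t)) (le_trans (iInf_le _ hUopen) (iInf_le _ hKU))
  refine le_trans step1 ?_
  apply iSup₂_le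
  intro K' hK'
  have hK'f : ∀ x ∈ K', (1 : ℝ≥0) ≤ (t⁻¹ • f) x := by
    intro x hx
    have : t < f x := hK' hx
    simp only [coe_smul, Pi.smul_apply, smul_eq_mul]
    rw [← inv_mul_cancel₀ htpos.ne']
    exact mul_le_mul_right this.le _
  have h1 : rieszContentAux Λ K' ≤ t⁻¹ * Λ f := by
    have := rieszContentAux_le Λ hK'f
    rwa [_root_.map_smul, smul_eq_mul] at this
  have h2 : t⁻¹ * Λ f ≤ a + ε := by
    have hΛ : Λ f ≤ a + ε / 2 := hfΛ.le
    calc t⁻¹ * Λ f ≤ t⁻¹ * (a + ε / 2) := mul_le_mul_right hΛ _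
    _ = a + ε := by
        rw [hT, inv_div, div_mul_cancel₀ _ hden2]
  calc ((rieszContent Λ) K' : ℝ≥0∞) = ((rieszContentAux Λ K' : ℝ≥0) : ℝ≥0∞) := rfl
  _ ≤ ((a + ε : ℝ≥0) : ℝ≥0∞) := by exact_mod_cast h1.trans h2
  _ = (a : ℝ≥0∞) + ε := by rw [ENNReal.coe_add]

lemma riesz_measure_univ_le : (rieszContent Λ).measure univ ≤ (Λ 1 : ℝ≥0∞) := by
  have e1 : (rieszContent Λ).measure univ = (rieszContent Λ).outerMeasure univ :=
    Content.measure_apply _ MeasurableSet.univ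
  rw [e1, (rieszContent Λ).outerMeasure_of_isOpen univ isOpen_univ]
  refine le_trans ((rieszContent Λ).innerContent_le ⟨univ, isOpen_univ⟩ ⟨univ, isCompact_univ⟩
    (subset_refl _)) ?_
  have : rieszContentAux Λ ⟨univ, isCompact_univ⟩ ≤ Λ 1 :=
    rieszContentAux_le Λ (fun x _ => by simp)
  exact ENNReal.coe_le_coe.mpr this

end B
section C
open BoundedContinuousFunction TopologicalSpace Set

variable {X : Type*} [MetricSpace X] [CompactSpace X] [MeasurableSpace X] [BorelSpace X]
variable (Λ : (X →ᵇ ℝ≥0) →ₗ[ℝ≥0] ℝ≥0)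

theorem riesz_lintegral (f : X →ᵇ ℝ≥0) :
    ∫⁻ x, (f x : ℝ≥0∞) ∂(rieszContent Λ).measure = (Λ f : ℝ≥0∞) := by
  set μ := (rieszContent Λ).measure with hμ
  set C : ℝ≥0 := nndist f 0 with hCdef
  have hC : ∀ x, f x ≤ C := fun x => by
    have := BoundedContinuousFunction.nndist_coe_le_nndist (f := f) (g := 0) x
    simpa [NNReal.nndist_zero_eq_val'] using this
  have hMfin : μ univ ≠ ∞ := (lt_of_le_of_lt (riesz_measure_univ_le Λ) ENNReal.coe_lt_top).ne
  have main : ∀ n : ℕ, 1 ≤ n →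
      (∫⁻ x, (f x : ℝ≥0∞) ∂μ ≤ (Λ f : ℝ≥0∞) + (C : ℝ≥0∞) * μ univ / n ∧
       (Λ f : ℝ≥0∞) ≤ ∫⁻ x, (f x : ℝ≥0∞) ∂μ + (C : ℝ≥0∞) * μ univ / n) := by
    intro n hn
    have hnn : (n : ℝ≥0) ≠ 0 := by positivity
    set Δ : ℝ≥0 := C / n with hΔ
    set y : ℕ → ℝ≥0 := fun i => (i : ℝ≥0) * Δ with hy
    have hymono : Monotone y := fun i j hij => mul_le_mul_left (by exact_mod_cast hij) Δ
    have hyn : y n = C := by rw [hy]; simp only [hΔ]; rw [mul_comm, div_mul_cancel₀ _ hnn]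
    have hystep : ∀ i, y (i + 1) = y i + Δ := by
      intro i
      simp only [hy, Nat.cast_succ, add_mul, one_mul]
    set s : ℕ → Set X := fun i => {x | y i ≤ f x} with hs
    have hsclosed : ∀ i, IsClosed (s i) := fun i => IsClosed.preimage f.continuous isClosed_Ici
    have hsmeas : ∀ i, MeasurableSet (s i) := fun i => (hsclosed i).measurableSet
    set Kc : ℕ → Compacts X := fun i => ⟨s i, (hsclosed i).isCompact⟩ with hKc
    set g : ℕ → X →ᵇ ℝ≥0 := fun i =>
      mkOfCompact ⟨fun x => min (f x) (y (i + 1)) - min (f x) (y i), by fun_prop⟩ with hgdef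
    have hgapp : ∀ i x, g i x = min (f x) (y (i + 1)) - min (f x) (y i) := fun i x => rfl
    have p0 : ∀ x, ∑ i ∈ Finset.range n, g i x = f x := by
      intro x
      have hm : Monotone fun i => min (f x) (y i) := fun i j hij => min_le_min le_rfl (hymono hij)
      calc ∑ i ∈ Finset.range n, g i x
          = ∑ i ∈ Finset.range n, (min (f x) (y (i + 1)) - min (f x) (y i)) := rfl
        _ = min (f x) (y n) - min (f x) (y 0) := Finset.sum_range_tsub hm n
        _ = f x := by
            rw [hyn, min_eq_left (hC x)]
            have : y 0 = 0 := by simp [hy]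
            rw [this, min_eq_right zero_le, tsub_zero]
    have p1 : ∀ i x, x ∈ s (i + 1) → g i x = Δ := by
      intro i x hx
      have hx' : y (i + 1) ≤ f x := hx
      have h2 : y i ≤ f x := le_trans (hymono (Nat.le_succ i)) hx'
      rw [hgapp, min_eq_right hx', min_eq_right h2, hystep, add_tsub_cancel_left]
    have p2 : ∀ i x, g i x ≤ Δ := by
      intro i x
      rw [hgapp, tsub_le_iff_right]
      rcases le_total (f x) (y i) with h | h
      · calc min (f x) (y (i + 1)) ≤ f x := min_le_left _ _
          _ = min (f x) (y i) := (min_eq_left h).symm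
          _ ≤ Δ + min (f x) (y i) := le_add_self
      · rw [min_eq_right h]
        calc min (f x) (y (i + 1)) ≤ y (i + 1) := min_le_right _ _
          _ = y i + Δ := hystep i
          _ = Δ + y i := add_comm _ _
    have p3 : ∀ i x, g i x ≠ 0 → x ∈ s i := by
      intro i x hgx
      by_contra hx
      apply hgx
      have hlt : f x < y i := not_le.mp hx
      have h1 : f x ≤ y i := hlt.le
      have h2 : f x ≤ y (i + 1) := le_trans h1 (hymono (Nat.le_succ i))
      rw [hgapp, min_eq_left h2, min_eq_left h1, tsub_self]
    have upperL : ∀ i, (Λ (g i) : ℝ≥0∞) ≤ (Δ : ℝ≥0∞) * μ (s i) := by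
      intro i
      have h1 : Λ (g i) ≤ Δ * rieszContentAux Λ (Kc i) :=
        lam_le_content_mul Λ Δ (p2 i) (p3 i)
      have h2 : (rieszContentAux Λ (Kc i) : ℝ≥0∞) ≤ μ (s i) := by
        have e1 : μ (s i) = (rieszContent Λ).outerMeasure (s i) :=
          Content.measure_apply _ (hsmeas i)
        rw [e1]
        exact (rieszContent Λ).le_outerMeasure_compacts (Kc i)
      calc (Λ (g i) : ℝ≥0∞) ≤ ((Δ * rieszContentAux Λ (Kc i) : ℝ≥0) : ℝ≥0∞) :=
            ENNReal.coe_le_coe.mpr h1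
        _ = (Δ : ℝ≥0∞) * (rieszContentAux Λ (Kc i) : ℝ≥0∞) := ENNReal.coe_mul _ _
        _ ≤ _ := mul_le_mul_right h2 _
    have lowerL : ∀ i, (Δ : ℝ≥0∞) * μ (s (i + 1)) ≤ (Λ (g i) : ℝ≥0∞) := by
      intro i
      rcases eq_or_ne Δ 0 with h0 | h0
      · simp [h0]
      · have h1 : rieszContentAux Λ (Kc (i + 1)) ≤ Δ⁻¹ * Λ (g i) := by
          have hle : ∀ x ∈ Kc (i + 1), (1 : ℝ≥0) ≤ (Δ⁻¹ • g i) x := by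
            intro x hx
            simp only [coe_smul, Pi.smul_apply, smul_eq_mul]
            rw [p1 i x hx, inv_mul_cancel₀ h0]
          have := rieszContentAux_le Λ hle
          rwa [_root_.map_smul, smul_eq_mul] at this
        have h2 : μ (s (i + 1)) ≤ (rieszContentAux Λ (Kc (i + 1)) : ℝ≥0∞) :=
          riesz_measure_le_content Λ (Kc (i + 1))
        have h3 : Δ * (Δ⁻¹ * Λ (g i)) = Λ (g i) := by
          rw [← mul_assoc, mul_inv_cancel₀ h0, one_mul]
        calc (Δ : ℝ≥0∞) * μ (s (i + 1))
            ≤ (Δ : ℝ≥0∞) * (rieszContentAux Λ (Kc (i + 1)) : ℝ≥0∞) := mul_le_mul_right h2 _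
          _ ≤ (Δ : ℝ≥0∞) * ((Δ⁻¹ * Λ (g i) : ℝ≥0) : ℝ≥0∞) :=
              mul_le_mul_right (ENNReal.coe_le_coe.mpr h1) _
          _ = ((Δ * (Δ⁻¹ * Λ (g i)) : ℝ≥0) : ℝ≥0∞) := (ENNReal.coe_mul _ _).symm
          _ = (Λ (g i) : ℝ≥0∞) := by rw [h3]
    have upperI : ∀ i, ∫⁻ x, (g i x : ℝ≥0∞) ∂μ ≤ (Δ : ℝ≥0∞) * μ (s i) := by
      intro i
      have hpt : ∀ x, (g i x : ℝ≥0∞) ≤ (s i).indicator (fun _ => (Δ : ℝ≥0∞)) x := by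
        intro x
        by_cases hx : x ∈ s i
        · rw [Set.indicator_of_mem hx]
          exact ENNReal.coe_le_coe.mpr (p2 i x)
        · rw [Set.indicator_of_notMem hx]
          have hz : g i x = 0 := by
            by_contra h
            exact hx (p3 i x h)
          simp [hz]
      calc ∫⁻ x, (g i x : ℝ≥0∞) ∂μ
          ≤ ∫⁻ x, (s i).indicator (fun _ => (Δ : ℝ≥0∞)) x ∂μ := lintegral_mono hpt
        _ = (Δ : ℝ≥0∞) * μ (s i) := lintegral_indicator_const (hsmeas i) _
    have lowerI : ∀ i, (Δ : ℝ≥0∞) * μ (s (i + 1)) ≤ ∫⁻ x, (g i x : ℝ≥0∞) ∂μ := by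
      intro i
      have hpt : ∀ x, (s (i + 1)).indicator (fun _ => (Δ : ℝ≥0∞)) x ≤ (g i x : ℝ≥0∞) := by
        intro x
        by_cases hx : x ∈ s (i + 1)
        · rw [Set.indicator_of_mem hx, p1 i x hx]
        · simp [Set.indicator_of_notMem hx]
      calc (Δ : ℝ≥0∞) * μ (s (i + 1))
          = ∫⁻ x, (s (i + 1)).indicator (fun _ => (Δ : ℝ≥0∞)) x ∂μ :=
            (lintegral_indicator_const (hsmeas (i + 1)) _).symm
        _ ≤ _ := lintegral_mono hpt
    have hgmeas : ∀ i, Measurable fun x => (g i x : ℝ≥0∞) :=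
      fun i => measurable_coe_nnreal_ennreal.comp (g i).continuous.measurable
    have hIsum : ∫⁻ x, (f x : ℝ≥0∞) ∂μ = ∑ i ∈ Finset.range n, ∫⁻ x, (g i x : ℝ≥0∞) ∂μ := by
      rw [← lintegral_finset_sum _ (fun i _ => hgmeas i)]
      congr 1
      funext x
      rw [← ENNReal.coe_finset_sum, p0 x]
    have hLsum : (Λ f : ℝ≥0∞) = ∑ i ∈ Finset.range n, (Λ (g i) : ℝ≥0∞) := by
      have hf : f = ∑ i ∈ Finset.range n, g i := by
        ext x
        rw [BoundedContinuousFunction.coe_sum, Finset.sum_apply, p0 x]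
      rw [← ENNReal.coe_finset_sum, ENNReal.coe_inj]
      rw [hf, map_sum]
    set S1 := ∑ i ∈ Finset.range n, (Δ : ℝ≥0∞) * μ (s (i + 1)) with hS1
    set S2 := ∑ i ∈ Finset.range n, (Δ : ℝ≥0∞) * μ (s i) with hS2
    have hS21 : S2 ≤ S1 + (Δ : ℝ≥0∞) * μ univ := by
      obtain ⟨k, rfl⟩ : ∃ k, n = k + 1 := ⟨n - 1, (Nat.succ_pred_eq_of_pos hn).symm⟩
      rw [hS2, Finset.sum_range_succ']
      have hsub : ∑ i ∈ Finset.range k, (Δ : ℝ≥0∞) * μ (s (i + 1)) ≤ S1 :=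
        Finset.sum_le_sum_of_subset (Finset.range_subset_range.mpr (Nat.le_succ k))
      exact add_le_add hsub (mul_le_mul_right (measure_mono (Set.subset_univ _)) _)
    have hΔdiv : (Δ : ℝ≥0∞) * μ univ = (C : ℝ≥0∞) * μ univ / n := by
      rw [hΔ, ENNReal.coe_div hnn, ENNReal.coe_natCast, div_eq_mul_inv, div_eq_mul_inv, mul_right_comm]
    have hIle : ∫⁻ x, (f x : ℝ≥0∞) ∂μ ≤ S2 := by
      rw [hIsum]; exact Finset.sum_le_sum fun i _ => upperI i
    have hIge : S1 ≤ ∫⁻ x, (f x : ℝ≥0∞) ∂μ := by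
      rw [hIsum]; exact Finset.sum_le_sum fun i _ => lowerI i
    have hLle : (Λ f : ℝ≥0∞) ≤ S2 := by
      rw [hLsum]; exact Finset.sum_le_sum fun i _ => upperL i
    have hLge : S1 ≤ (Λ f : ℝ≥0∞) := by
      rw [hLsum]; exact Finset.sum_le_sum fun i _ => lowerL i
    constructor
    · calc ∫⁻ x, (f x : ℝ≥0∞) ∂μ ≤ S2 := hIle
        _ ≤ S1 + (Δ : ℝ≥0∞) * μ univ := hS21
        _ ≤ (Λ f : ℝ≥0∞) + (C : ℝ≥0∞) * μ univ / n := by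
            rw [← hΔdiv]; exact add_le_add_left hLge _
    · calc (Λ f : ℝ≥0∞) ≤ S2 := hLle
        _ ≤ S1 + (Δ : ℝ≥0∞) * μ univ := hS21
        _ ≤ ∫⁻ x, (f x : ℝ≥0∞) ∂μ + (C : ℝ≥0∞) * μ univ / n := by
            rw [← hΔdiv]; exact add_le_add_left hIge _
  have hcfin : (C : ℝ≥0∞) * μ univ ≠ ∞ := ENNReal.mul_ne_top ENNReal.coe_ne_top hMfin
  exact le_antisymm
    (ennreal_le_of_forall_le_add_div hcfin fun n hn => (main n hn).1)
    (ennreal_le_of_forall_le_add_div hcfin fun n hn => (main n hn).2)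

end C
section D
open BoundedContinuousFunction TopologicalSpace Set MeasureTheory.FiniteMeasure Topology

variable {E : Type*} [MetricSpace E] [CompactSpace E] [MeasurableSpace E] [BorelSpace E]

theorem compact_Lset (Γ : ℕ → Set E) (hΓcpt : ∀ ℓ : ℕ, 1 ≤ ℓ → IsCompact (Γ ℓ))
    (m : ℕ) (hm : 1 ≤ m) :
    IsCompact {ν : FiniteMeasure E | ∀ ℓ : ℕ, m ≤ ℓ →
      (ν : Measure E) (Γ ℓ)ᶜ ≤ ((ℓ : ℝ≥0∞))⁻¹ ∧ (ν : Measure E) Set.univ ≤ (ℓ : ℝ≥0∞)} := by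
  set L := {ν : FiniteMeasure E | ∀ ℓ : ℕ, m ≤ ℓ →
      (ν : Measure E) (Γ ℓ)ᶜ ≤ ((ℓ : ℝ≥0∞))⁻¹ ∧ (ν : Measure E) Set.univ ≤ (ℓ : ℝ≥0∞)} with hL
  rw [isCompact_iff_ultrafilter_le_nhds]
  intro F hF
  have hLF : L ∈ F := le_principal_iff.mp hF
  have hmassL : ∀ ν ∈ L, FiniteMeasure.mass ν ≤ (m : ℝ≥0) := by
    intro ν hν
    have h1 : (ν : Measure E) Set.univ ≤ (m : ℝ≥0∞) := (hν m le_rfl).2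
    have h2 := ENNReal.toNNReal_mono (ENNReal.natCast_ne_top m) h1
    simp [ENNReal.toNNReal_coe] at h2
    exact h2
  -- limits along the ultrafilter
  have hlim : ∀ f : E →ᵇ ℝ≥0, ∃ x : ℝ≥0,
      Filter.Tendsto (fun ν : FiniteMeasure E => ν.testAgainstNN f) ↑F (𝓝 x) := by
    intro f
    have hcpt : IsCompact (Set.Icc (0 : ℝ≥0) (nndist f 0 * m)) := isCompact_Icc
    have hmem : Set.Icc (0 : ℝ≥0) (nndist f 0 * m) ∈
        (F.map (fun ν : FiniteMeasure E => ν.testAgainstNN f)) := by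
      rw [Ultrafilter.mem_map]
      filter_upwards [hLF] with ν hν
      refine ⟨zero_le, ?_⟩
      have h1 := ν.testAgainstNN_lipschitz_estimate f 0
      rw [ν.testAgainstNN_zero, zero_add] at h1
      exact h1.trans (mul_le_mul_right (hmassL ν hν) _)
    obtain ⟨x, -, hx⟩ := hcpt.ultrafilter_le_nhds (F.map _) (le_principal_iff.mpr hmem)
    exact ⟨x, hx⟩
  choose Λ₀ hΛ₀ using hlim
  have hadd : ∀ f g : E →ᵇ ℝ≥0, Λ₀ (f + g) = Λ₀ f + Λ₀ g := by
    intro f g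
    have h1 : Filter.Tendsto (fun ν : FiniteMeasure E => ν.testAgainstNN (f + g)) ↑F
        (𝓝 (Λ₀ f + Λ₀ g)) := by
      have h2 := (hΛ₀ f).add (hΛ₀ g)
      have h3 : (fun ν : FiniteMeasure E => ν.testAgainstNN (f + g)) =
          fun ν => ν.testAgainstNN f + ν.testAgainstNN g :=
        funext fun ν => ν.testAgainstNN_add f g
      rwa [h3]
    exact tendsto_nhds_unique (hΛ₀ (f + g)) h1
  have hsmul : ∀ (c : ℝ≥0) (f : E →ᵇ ℝ≥0), Λ₀ (c • f) = c * Λ₀ f := by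
    intro c f
    have h1 : Filter.Tendsto (fun ν : FiniteMeasure E => ν.testAgainstNN (c • f)) ↑F
        (𝓝 (c * Λ₀ f)) := by
      have h2 := (hΛ₀ f).const_mul c
      have h3 : (fun ν : FiniteMeasure E => ν.testAgainstNN (c • f)) =
          fun ν => c * ν.testAgainstNN f := by
        funext ν
        rw [ν.testAgainstNN_smul c f, smul_eq_mul]
      rwa [h3]
    exact tendsto_nhds_unique (hΛ₀ (c • f)) h1
  set Λ : (E →ᵇ ℝ≥0) →ₗ[ℝ≥0] ℝ≥0 :=
    { toFun := Λ₀, map_add' := hadd, map_smul' := hsmul } with hΛdef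
  have hΛapp : ∀ f, Λ f = Λ₀ f := fun f => rfl
  set μ₀ : Measure E := (rieszContent Λ).measure with hμ₀
  have hμ₀fin : IsFiniteMeasure μ₀ :=
    ⟨lt_of_le_of_lt (riesz_measure_univ_le Λ) ENNReal.coe_lt_top⟩
  set nulim : FiniteMeasure E := ⟨μ₀, hμ₀fin⟩ with hnulim
  have hnulimmeas : (nulim : Measure E) = μ₀ := rfl
  have htest : ∀ f : E →ᵇ ℝ≥0, nulim.testAgainstNN f = Λ f := by
    intro f
    have h1 : ∫⁻ x, (f x : ℝ≥0∞) ∂μ₀ = (Λ f : ℝ≥0∞) := riesz_lintegral Λ f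
    simp only [FiniteMeasure.testAgainstNN, hnulimmeas, h1, ENNReal.toNNReal_coe]
  -- the limit is in L
  have hmemL : nulim ∈ L := by
    intro ℓ hℓ
    have hℓ1 : 1 ≤ ℓ := hm.trans hℓ
    have hℓ0 : (ℓ : ℝ≥0) ≠ 0 := by positivity
    constructor
    · -- open set bound
      have hUopen : IsOpen (Γ ℓ)ᶜ := (hΓcpt ℓ hℓ1).isClosed.isOpen_compl
      have e1 : μ₀ (Γ ℓ)ᶜ = (rieszContent Λ).outerMeasure (Γ ℓ)ᶜ :=
        Content.measure_apply _ hUopen.measurableSet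
      rw [hnulimmeas, e1, (rieszContent Λ).outerMeasure_of_isOpen _ hUopen]
      apply iSup₂_le
      intro K hK
      obtain ⟨g, hg0, hg1, hgle⟩ := urysohn_nnreal (hΓcpt ℓ hℓ1).isClosed K.2.isClosed
        (Set.disjoint_left.mpr fun x hx hxK => (hK hxK) hx)
      have h1 : rieszContentAux Λ K ≤ Λ g :=
        rieszContentAux_le Λ (fun x hx => (hg1 x hx).ge)
      have h2 : Λ g ≤ (ℓ : ℝ≥0)⁻¹ := by
        rw [hΛapp]
        refine le_of_tendsto (hΛ₀ g) ?_
        filter_upwards [hLF] with ν hν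
        have h3 : ∫⁻ x, (g x : ℝ≥0∞) ∂(ν : Measure E) ≤ (ν : Measure E) (Γ ℓ)ᶜ := by
          have hpt : ∀ x, (g x : ℝ≥0∞) ≤ (Γ ℓ)ᶜ.indicator (fun _ => (1 : ℝ≥0∞)) x := by
            intro x
            by_cases hx : x ∈ (Γ ℓ)ᶜ
            · rw [Set.indicator_of_mem hx]
              exact_mod_cast hgle x
            · rw [Set.indicator_of_notMem hx]
              have : g x = 0 := hg0 x (not_not.mp hx)
              simp [this]
          calc ∫⁻ x, (g x : ℝ≥0∞) ∂(ν : Measure E)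
              ≤ ∫⁻ x, (Γ ℓ)ᶜ.indicator (fun _ => (1 : ℝ≥0∞)) x ∂(ν : Measure E) :=
                lintegral_mono hpt
            _ = 1 * (ν : Measure E) (Γ ℓ)ᶜ := lintegral_indicator_const hUopen.measurableSet _
            _ = (ν : Measure E) (Γ ℓ)ᶜ := one_mul _
        have h4 : ∫⁻ x, (g x : ℝ≥0∞) ∂(ν : Measure E) ≤ (((ℓ : ℝ≥0)⁻¹ : ℝ≥0) : ℝ≥0∞) := by
          refine h3.trans ?_
          rw [ENNReal.coe_inv hℓ0, ENNReal.coe_natCast]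
          exact (hν ℓ hℓ).1
        have h5 := ENNReal.toNNReal_mono ENNReal.coe_ne_top h4
        rwa [ENNReal.toNNReal_coe] at h5
      have : rieszContentAux Λ K ≤ (ℓ : ℝ≥0)⁻¹ := h1.trans h2
      calc ((rieszContent Λ) K : ℝ≥0∞) ≤ (((ℓ : ℝ≥0)⁻¹ : ℝ≥0) : ℝ≥0∞) := ENNReal.coe_le_coe.mpr this
        _ = ((ℓ : ℝ≥0∞))⁻¹ := by rw [ENNReal.coe_inv hℓ0, ENNReal.coe_natCast]
    · -- mass bound
      have h1 : μ₀ Set.univ = (Λ 1 : ℝ≥0∞) := by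
        have := riesz_lintegral Λ (1 : E →ᵇ ℝ≥0)
        simpa using this
      have h2 : Λ (1 : E →ᵇ ℝ≥0) ≤ (ℓ : ℝ≥0) := by
        rw [hΛapp]
        refine le_of_tendsto (hΛ₀ 1) ?_
        filter_upwards [hLF] with ν hν
        rw [ν.testAgainstNN_one]
        have h3 := ENNReal.toNNReal_mono (ENNReal.natCast_ne_top ℓ) (hν ℓ hℓ).2
        simp [ENNReal.toNNReal_coe] at h3
        exact h3
      rw [hnulimmeas, h1]
      exact_mod_cast ENNReal.coe_le_coe.mpr h2
  refine ⟨nulim, hmemL, ?_⟩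
  have hconv : Filter.Tendsto (fun ν : FiniteMeasure E => ν) ↑F (𝓝 nulim) := by
    apply FiniteMeasure.tendsto_iff_forall_testAgainstNN_tendsto.mpr
    intro f
    rw [htest f, hΛapp]
    exact hΛ₀ f
  simpa [Filter.Tendsto, Filter.map_id'] using hconv

end D

end OldRiesz

open OldRiesz

section E
open Finset
open scoped Nat

lemma real_exp_hasSum (x : ℝ) : HasSum (fun n : ℕ => x ^ n / n !) (Real.exp x) := by
  rw [Real.exp_eq_exp_ℝ]
  exact NormedSpace.expSeries_div_hasSum_exp x

lemma pmf_nat_integral (p : PMF ℕ) (g : ℕ → ℝ) (hg : ∀ k, 0 ≤ g k) {S : ℝ}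
    (hS : HasSum (fun k => (p k).toReal * g k) S) :
    Integrable g p.toMeasure ∧ ∫ k, g k ∂p.toMeasure = S := by
  have hterm : ∀ k, ((‖g k‖₊ : ℝ≥0∞) * p.toMeasure {k}) = ENNReal.ofReal ((p k).toReal * g k) := by
    intro k
    rw [p.toMeasure_apply_singleton k (measurableSet_singleton k),
      ← enorm_eq_nnnorm, Real.enorm_eq_ofReal (hg k),
      ENNReal.ofReal_mul ENNReal.toReal_nonneg,
      ENNReal.ofReal_toReal (p.apply_ne_top k), mul_comm]
  have hint : Integrable g p.toMeasure := by
    constructor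
    · exact (measurable_from_top (f := g)).aestronglyMeasurable
    · show (∫⁻ k, (‖g k‖₊ : ℝ≥0∞) ∂p.toMeasure) < ∞
      rw [lintegral_countable']
      have h2 : ∑' k, ((‖g k‖₊ : ℝ≥0∞) * p.toMeasure {k}) = ENNReal.ofReal S := by
        rw [tsum_congr hterm, ← ENNReal.ofReal_tsum_of_nonneg
          (fun k => mul_nonneg ENNReal.toReal_nonneg (hg k)) hS.summable, hS.tsum_eq]
      rw [h2]
      exact ENNReal.ofReal_lt_top
  refine ⟨hint, ?_⟩
  rw [PMF.integral_eq_tsum p g hint]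
  simp_rw [smul_eq_mul]
  exact hS.tsum_eq

lemma poisson_exp_moment (r : ℝ≥0) (t : ℝ) :
    Integrable (fun k : ℕ => Real.exp (t * k)) (poissonPMF r).toMeasure ∧
    ∫ k, Real.exp (t * (k : ℝ)) ∂(poissonPMF r).toMeasure
      = Real.exp ((r : ℝ) * (Real.exp t - 1)) := by
  have hval : ∀ k : ℕ, ((poissonPMF r) k).toReal = poissonPMFReal r k := by
    intro k
    have : (poissonPMF r) k = ENNReal.ofReal (poissonPMFReal r k) := rfl
    rw [this, ENNReal.toReal_ofReal poissonPMFReal_nonneg]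
  have hS : HasSum (fun k : ℕ => ((poissonPMF r) k).toReal * Real.exp (t * k))
      (Real.exp ((r : ℝ) * (Real.exp t - 1))) := by
    have h1 : HasSum (fun k : ℕ => Real.exp (-(r : ℝ)) * (((r : ℝ) * Real.exp t) ^ k / k !))
        (Real.exp (-(r : ℝ)) * Real.exp ((r : ℝ) * Real.exp t)) :=
      (real_exp_hasSum ((r : ℝ) * Real.exp t)).mul_left _
    have h2 : (fun k : ℕ => ((poissonPMF r) k).toReal * Real.exp (t * k)) =
        fun k : ℕ => Real.exp (-(r : ℝ)) * (((r : ℝ) * Real.exp t) ^ k / k !) := by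
      funext k
      rw [hval k, poissonPMFReal, mul_comm t (k : ℝ), Real.exp_nat_mul, mul_pow]
      ring
    have h3 : Real.exp (-(r : ℝ)) * Real.exp ((r : ℝ) * Real.exp t)
        = Real.exp ((r : ℝ) * (Real.exp t - 1)) := by
      rw [← Real.exp_add]
      ring_nf
    rw [h2, ← h3]
    exact h1
  exact pmf_nat_integral (poissonPMF r) (fun k => Real.exp (t * k))
    (fun k => (Real.exp_pos _).le) hS

end E
section F
open Finset

variable {E : Type*} [MeasurableSpace E] {Ω : Type*} [MeasurableSpace Ω]

lemma chernoff_sum (P : Measure Ω) [IsProbabilityMeasure P]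
    (τ : Measure E) [IsFiniteMeasure τ]
    (ζ : ℕ → Ω → Measure E) (N : ℕ → Set E → Ω → ℕ)
    (hval : ∀ (ℓ : ℕ) (A : Set E), MeasurableSet A → ∀ ω, ζ ℓ ω A = (N ℓ A ω : ℝ≥0∞))
    (hmeas : ∀ (ℓ : ℕ) (A : Set E), MeasurableSet A → Measurable (N ℓ A))
    (hlaw : ∀ (ℓ : ℕ) (A : Set E), MeasurableSet A →
      Measure.map (N ℓ A) P = (poissonPMF (τ A).toNNReal).toMeasure)
    (hζmeas : ∀ ℓ, Measurable (ζ ℓ))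
    (hiid : iIndepFun ζ P)
    (A : Set E) (hA : MeasurableSet A) (r : ℕ) (t c : ℝ) (ht : 0 ≤ t) :
    (P {ω | c ≤ ∑ j ∈ Finset.range r, (N j A ω : ℝ)}).toReal ≤
      Real.exp (-(t * c) + r * ((τ A).toReal * (Real.exp t - 1))) := by
  classical
  set lam : ℝ≥0 := (τ A).toNNReal with hlam
  have hlamR : (lam : ℝ) = (τ A).toReal := rfl
  set X : ℕ → Ω → ℝ := fun j ω => (N j A ω : ℝ) with hX
  have hXmeas : ∀ j, Measurable (X j) :=
    fun j => (measurable_from_top (f := (Nat.cast : ℕ → ℝ))).comp (hmeas j A hA)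
  have hXindep : iIndepFun X P := by
    have hg : Measurable fun μ' : Measure E => (μ' A).toReal :=
      ENNReal.measurable_toReal.comp (Measure.measurable_coe hA)
    have h1 := hiid.comp (fun _ => fun μ' : Measure E => (μ' A).toReal) (fun _ => hg)
    have h2 : (fun i => (fun μ' : Measure E => (μ' A).toReal) ∘ ζ i) = X := by
      funext i ω
      simp [Function.comp_apply, hX, hval i A hA ω]
    rwa [h2] at h1
  have hmap : ∀ j, Measure.map (X j) P
      = Measure.map (Nat.cast : ℕ → ℝ) (poissonPMF lam).toMeasure := by
    intro j
    have h0 : X j = (Nat.cast : ℕ → ℝ) ∘ (N j A) := rfl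
    rw [h0, ← Measure.map_map (measurable_from_top) (hmeas j A hA), hlaw j A hA]
  have hexp_meas : AEStronglyMeasurable (fun y : ℝ => Real.exp (t * y))
      (Measure.map (Nat.cast : ℕ → ℝ) (poissonPMF lam).toMeasure) :=
    (Real.continuous_exp.comp (continuous_const.mul continuous_id)).aestronglyMeasurable
  have hint : ∀ j, Integrable (fun ω => Real.exp (t * X j ω)) P := by
    intro j
    have h1 : Integrable (fun y : ℝ => Real.exp (t * y)) (Measure.map (X j) P) := by
      rw [hmap j]
      rw [integrable_map_measure hexp_meas (measurable_from_top).aemeasurable]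
      exact (poisson_exp_moment lam t).1
    have h2 := (integrable_map_measure (by rw [← hmap j] at hexp_meas; exact hexp_meas)
      (hXmeas j).aemeasurable).mp h1
    exact h2
  have hmgf : ∀ j, mgf (X j) P t = Real.exp ((lam : ℝ) * (Real.exp t - 1)) := by
    intro j
    have h1 : ∫ y, Real.exp (t * y) ∂(Measure.map (X j) P) = ∫ ω, Real.exp (t * X j ω) ∂P :=
      integral_map (hXmeas j).aemeasurable (by rw [← hmap j] at hexp_meas; exact hexp_meas)
    have h2 : ∫ y, Real.exp (t * y) ∂(Measure.map (Nat.cast : ℕ → ℝ) (poissonPMF lam).toMeasure)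
        = ∫ k : ℕ, Real.exp (t * (k : ℝ)) ∂(poissonPMF lam).toMeasure :=
      integral_map (measurable_from_top).aemeasurable hexp_meas
    rw [mgf, ← h1, hmap j, h2]
    exact (poisson_exp_moment lam t).2
  have hsummgf : mgf (∑ j ∈ Finset.range r, X j) P t
      = Real.exp (r * ((lam : ℝ) * (Real.exp t - 1))) := by
    rw [hXindep.mgf_sum hXmeas (Finset.range r)]
    have : ∀ j ∈ Finset.range r, mgf (X j) P t = Real.exp ((lam : ℝ) * (Real.exp t - 1)) :=
      fun j _ => hmgf j
    rw [Finset.prod_congr rfl this, Finset.prod_const, Finset.card_range, ← Real.exp_nat_mul]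
  have hintsum : Integrable (fun ω => Real.exp (t * (∑ j ∈ Finset.range r, X j) ω)) P :=
    iIndepFun.integrable_exp_mul_sum hXindep hXmeas (fun j _ => hint j)
  have hcher := measure_ge_le_exp_mul_mgf (X := ∑ j ∈ Finset.range r, X j) (μ := P) c ht hintsum
  rw [hsummgf] at hcher
  have hset : {ω | c ≤ ∑ j ∈ Finset.range r, (N j A ω : ℝ)}
      = {ω | c ≤ (∑ j ∈ Finset.range r, X j) ω} := by
    ext ω
    simp only [Set.mem_setOf_eq, Finset.sum_apply, hX]
  rw [hset]
  refine hcher.trans ?_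
  rw [← Real.exp_add, hlamR]
  exact le_of_eq (by ring_nf)
end F
section G
open Finset Topology

variable {E : Type*} [MetricSpace E] [CompactSpace E] [MeasurableSpace E] [BorelSpace E]
variable {Ω : Type*} [MeasurableSpace Ω]

lemma key_bound (P : Measure Ω) [IsProbabilityMeasure P] (τ : Measure E) [IsFiniteMeasure τ]
    (Γ : ℕ → Set E)
    (hΓcpt : ∀ ℓ : ℕ, 1 ≤ ℓ → IsCompact (Γ ℓ))
    (hΓτ : ∀ ℓ : ℕ, 1 ≤ ℓ →
      τ (Γ ℓ)ᶜ ≤ ENNReal.ofReal ((ℓ : ℝ) / (Real.exp (2 * (ℓ : ℝ) ^ 2) - 1)))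
    (ζ : ℕ → Ω → Measure E) (N : ℕ → Set E → Ω → ℕ)
    (hval : ∀ (ℓ : ℕ) (A : Set E), MeasurableSet A → ∀ ω, ζ ℓ ω A = (N ℓ A ω : ℝ≥0∞))
    (hmeas : ∀ (ℓ : ℕ) (A : Set E), MeasurableSet A → Measurable (N ℓ A))
    (hlaw : ∀ (ℓ : ℕ) (A : Set E), MeasurableSet A →
      Measure.map (N ℓ A) P = (poissonPMF (τ A).toNNReal).toMeasure)
    (hζmeas : ∀ ℓ, Measurable (ζ ℓ))
    (hiid : iIndepFun ζ P)
    (m : ℕ) (hm : 1 ≤ m) (r : ℕ) (hr : 1 ≤ r) :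
    P {ω | ¬ (∀ ℓ : ℕ, m ≤ ℓ →
        ((r : ℝ≥0∞)⁻¹ • ∑ j ∈ Finset.range r, ζ j ω) (Γ ℓ)ᶜ ≤ ((ℓ : ℝ≥0∞))⁻¹ ∧
        ((r : ℝ≥0∞)⁻¹ • ∑ j ∈ Finset.range r, ζ j ω) Set.univ ≤ (ℓ : ℝ≥0∞))}
      ≤ ENNReal.ofReal
        (4 * Real.exp (((τ Set.univ).toReal * (Real.exp 1 - 1) - m) * r)) := by
  classical
  set c₀ : ℝ := (τ Set.univ).toReal * (Real.exp 1 - 1) with hc₀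
  have he1 : (2 : ℝ) ≤ Real.exp 1 := by
    have := Real.add_one_le_exp (1 : ℝ)
    linarith
  have hc₀0 : 0 ≤ c₀ := mul_nonneg ENNReal.toReal_nonneg (by linarith)
  have hrR : (0 : ℝ) < r := by exact_mod_cast hr
  have hr1R : (1 : ℝ) ≤ (r : ℝ) := by exact_mod_cast hr
  have hrE0 : (r : ℝ≥0∞) ≠ 0 := Nat.cast_ne_zero.mpr (Nat.one_le_iff_ne_zero.mp hr)
  -- apply formula
  have happly : ∀ (B : Set E), MeasurableSet B → ∀ ω,
      ((r : ℝ≥0∞)⁻¹ • ∑ j ∈ Finset.range r, ζ j ω) B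
        = (r : ℝ≥0∞)⁻¹ * ((∑ j ∈ Finset.range r, N j B ω : ℕ) : ℝ≥0∞) := by
    intro B hB ω
    rw [Measure.smul_apply, smul_eq_mul, Measure.finset_sum_apply]
    congr 1
    push_cast
    exact Finset.sum_congr rfl fun j _ => hval j B hB ω
  -- derivation of real inequality from failure of condition
  have hgen : ∀ (B : Set E), MeasurableSet B → ∀ (v : ℝ≥0∞), v ≠ ∞ → ∀ ω,
      ¬ (((r : ℝ≥0∞)⁻¹ • ∑ j ∈ Finset.range r, ζ j ω) B ≤ v) →
      (r : ℝ) * v.toReal ≤ ∑ j ∈ Finset.range r, (N j B ω : ℝ) := by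
    intro B hB v hv ω hlt
    rw [happly B hB ω] at hlt
    set b : ℕ := ∑ j ∈ Finset.range r, N j B ω with hb
    have h1 : v < (r : ℝ≥0∞)⁻¹ * (b : ℝ≥0∞) := not_le.mp hlt
    have hfin : (r : ℝ≥0∞)⁻¹ * (b : ℝ≥0∞) ≠ ∞ :=
      ENNReal.mul_ne_top (ENNReal.inv_ne_top.mpr hrE0) (ENNReal.natCast_ne_top b)
    have h2 := ENNReal.toReal_strict_mono hfin h1
    rw [ENNReal.toReal_mul, ENNReal.toReal_inv] at h2
    have hcast : ((r : ℝ≥0∞)).toReal = (r : ℝ) := by simp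
    have hcastb : ((b : ℝ≥0∞)).toReal = (b : ℝ) := by simp
    rw [hcast, hcastb] at h2
    have h3 : (r : ℝ) * v.toReal < (r : ℝ) * ((r : ℝ)⁻¹ * (b : ℝ)) :=
      mul_lt_mul_of_pos_left h2 hrR
    rw [← mul_assoc, mul_inv_cancel₀ hrR.ne', one_mul] at h3
    have h4 : ∑ j ∈ Finset.range r, (N j B ω : ℝ) = (b : ℝ) := by
      rw [hb]; push_cast; rfl
    rw [h4]
    exact h3.le
  -- individual Chernoff bounds
  have hb1 : ∀ ℓ : ℕ, 1 ≤ ℓ →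
      P {ω | (r : ℝ) * ((ℓ : ℝ))⁻¹ ≤ ∑ j ∈ Finset.range r, (N j (Γ ℓ)ᶜ ω : ℝ)}
        ≤ ENNReal.ofReal (Real.exp (-(ℓ : ℝ) * r)) := by
    intro ℓ hℓ
    have hℓR : (1 : ℝ) ≤ (ℓ : ℝ) := by exact_mod_cast hℓ
    have hℓ0 : (0 : ℝ) < ℓ := by linarith
    have hch := chernoff_sum P τ ζ N hval hmeas hlaw hζmeas hiid ((Γ ℓ)ᶜ)
      (hΓcpt ℓ hℓ).isClosed.measurableSet.compl r (2 * (ℓ : ℝ) ^ 2) ((r : ℝ) * ((ℓ : ℝ))⁻¹)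
      (by positivity)
    refine (ENNReal.le_ofReal_iff_toReal_le (measure_ne_top _ _) (Real.exp_pos _).le).mpr ?_
    refine hch.trans ?_
    apply Real.exp_le_exp.mpr
    set X : ℝ := Real.exp (2 * (ℓ : ℝ) ^ 2) - 1 with hXdef
    have hXpos : 0 < X := by
      rw [hXdef, sub_pos, ← Real.exp_zero]
      exact Real.exp_lt_exp.mpr (by positivity)
    have hτb : (τ (Γ ℓ)ᶜ).toReal ≤ (ℓ : ℝ) / X :=
      ENNReal.toReal_le_of_le_ofReal (div_nonneg hℓ0.le hXpos.le) (hΓτ ℓ hℓ)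
    have e1 : 2 * (ℓ : ℝ) ^ 2 * ((r : ℝ) * ((ℓ : ℝ))⁻¹) = 2 * ℓ * r := by
      field_simp
    have e2 : (ℓ : ℝ) / X * X = ℓ := div_mul_cancel₀ _ hXpos.ne'
    calc -(2 * (ℓ : ℝ) ^ 2 * ((r : ℝ) * ((ℓ : ℝ))⁻¹)) + r * ((τ (Γ ℓ)ᶜ).toReal * X)
        = -(2 * (ℓ : ℝ) * r) + r * ((τ (Γ ℓ)ᶜ).toReal * X) := by rw [e1]
      _ ≤ -(2 * (ℓ : ℝ) * r) + r * (((ℓ : ℝ) / X) * X) := by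
          have : (τ (Γ ℓ)ᶜ).toReal * X ≤ ((ℓ : ℝ) / X) * X :=
            mul_le_mul_of_nonneg_right hτb hXpos.le
          have := mul_le_mul_of_nonneg_left this hrR.le
          linarith
      _ = -(2 * (ℓ : ℝ) * r) + r * ℓ := by rw [e2]
      _ = -(ℓ : ℝ) * r := by ring
  have hb2 : ∀ ℓ : ℕ,
      P {ω | (r : ℝ) * (ℓ : ℝ) ≤ ∑ j ∈ Finset.range r, (N j Set.univ ω : ℝ)}
        ≤ ENNReal.ofReal (Real.exp ((c₀ - ℓ) * r)) := by
    intro ℓ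
    have hch := chernoff_sum P τ ζ N hval hmeas hlaw hζmeas hiid Set.univ
      MeasurableSet.univ r 1 ((r : ℝ) * (ℓ : ℝ)) zero_le_one
    refine (ENNReal.le_ofReal_iff_toReal_le (measure_ne_top _ _) (Real.exp_pos _).le).mpr ?_
    refine hch.trans (le_of_eq ?_)
    congr 1
    rw [hc₀]
    ring
  -- event inclusion
  have hincl : {ω | ¬ (∀ ℓ : ℕ, m ≤ ℓ →
      ((r : ℝ≥0∞)⁻¹ • ∑ j ∈ Finset.range r, ζ j ω) (Γ ℓ)ᶜ ≤ ((ℓ : ℝ≥0∞))⁻¹ ∧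
      ((r : ℝ≥0∞)⁻¹ • ∑ j ∈ Finset.range r, ζ j ω) Set.univ ≤ (ℓ : ℝ≥0∞))}
      ⊆ ⋃ k : ℕ,
        ({ω | (r : ℝ) * (((m + k : ℕ) : ℝ))⁻¹ ≤
            ∑ j ∈ Finset.range r, (N j (Γ (m + k))ᶜ ω : ℝ)} ∪
         {ω | (r : ℝ) * ((m + k : ℕ) : ℝ) ≤
            ∑ j ∈ Finset.range r, (N j Set.univ ω : ℝ)}) := by
    intro ω hω
    simp only [Set.mem_setOf_eq] at hω
    rcases not_forall.mp hω with ⟨ℓ, hℓ⟩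
    rcases _root_.not_imp.mp hℓ with ⟨hmℓ, hcond⟩
    have hℓ1 : 1 ≤ ℓ := hm.trans hmℓ
    have hℓ0 : ((ℓ : ℝ≥0∞)) ≠ 0 := Nat.cast_ne_zero.mpr (Nat.one_le_iff_ne_zero.mp hℓ1)
    refine Set.mem_iUnion.mpr ⟨ℓ - m, ?_⟩
    rw [Nat.add_sub_cancel' hmℓ]
    rcases not_and_or.mp hcond with h | h
    · left
      have := hgen ((Γ ℓ)ᶜ) (hΓcpt ℓ hℓ1).isClosed.measurableSet.compl
        ((ℓ : ℝ≥0∞))⁻¹ (by simp [hℓ0]) ω h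
      simpa [ENNReal.toReal_inv] using this
    · right
      have := hgen Set.univ MeasurableSet.univ ((ℓ : ℝ≥0∞)) (ENNReal.natCast_ne_top ℓ) ω h
      simpa using this
  -- geometric summation
  have hx : Real.exp (-(r : ℝ)) < 1 := by
    rw [← Real.exp_zero]
    exact Real.exp_lt_exp.mpr (by linarith)
  have hxhalf : Real.exp (-(r : ℝ)) ≤ 1 / 2 := by
    have h1 : Real.exp (-(r : ℝ)) ≤ Real.exp (-1) := Real.exp_le_exp.mpr (by linarith [hr1R])
    have h2 : Real.exp (-1 : ℝ) = (Real.exp 1)⁻¹ := Real.exp_neg 1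
    have h3 : (Real.exp 1)⁻¹ ≤ 1 / 2 := by
      rw [inv_le_comm₀ (by positivity) (by norm_num)]
      linarith
    linarith
  have hgeo : ∀ k : ℕ, 2 * Real.exp ((c₀ - ((m + k : ℕ) : ℝ)) * r)
      = (2 * Real.exp ((c₀ - m) * r)) * (Real.exp (-(r : ℝ))) ^ k := by
    intro k
    rw [mul_assoc, ← Real.exp_nat_mul, ← Real.exp_add]
    congr 2
    push_cast
    ring
  have hsummable : Summable (fun k : ℕ => 2 * Real.exp ((c₀ - ((m + k : ℕ) : ℝ)) * r)) := by
    have := (summable_geometric_of_lt_one (Real.exp_pos _).le hx).mul_left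
      (2 * Real.exp ((c₀ - m) * r))
    exact this.congr fun k => (hgeo k).symm
  have htsum : (∑' k : ℕ, 2 * Real.exp ((c₀ - ((m + k : ℕ) : ℝ)) * r))
      ≤ 4 * Real.exp ((c₀ - m) * r) := by
    have h1 : (∑' k : ℕ, 2 * Real.exp ((c₀ - ((m + k : ℕ) : ℝ)) * r))
        = (2 * Real.exp ((c₀ - m) * r)) * (1 - Real.exp (-(r : ℝ)))⁻¹ := by
      rw [tsum_congr hgeo, tsum_mul_left, tsum_geometric_of_lt_one (Real.exp_pos _).le hx]
    rw [h1]
    have h2 : (1 - Real.exp (-(r : ℝ)))⁻¹ ≤ 2 := by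
      rw [inv_le_comm₀ (by linarith) (by norm_num)]
      linarith
    calc (2 * Real.exp ((c₀ - m) * r)) * (1 - Real.exp (-(r : ℝ)))⁻¹
        ≤ (2 * Real.exp ((c₀ - m) * r)) * 2 := by
          apply mul_le_mul_of_nonneg_left h2 (by positivity)
      _ = 4 * Real.exp ((c₀ - m) * r) := by ring
  -- put everything together
  calc P {ω | ¬ (∀ ℓ : ℕ, m ≤ ℓ →
        ((r : ℝ≥0∞)⁻¹ • ∑ j ∈ Finset.range r, ζ j ω) (Γ ℓ)ᶜ ≤ ((ℓ : ℝ≥0∞))⁻¹ ∧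
        ((r : ℝ≥0∞)⁻¹ • ∑ j ∈ Finset.range r, ζ j ω) Set.univ ≤ (ℓ : ℝ≥0∞))}
      ≤ ∑' k : ℕ, P (({ω | (r : ℝ) * (((m + k : ℕ) : ℝ))⁻¹ ≤
            ∑ j ∈ Finset.range r, (N j (Γ (m + k))ᶜ ω : ℝ)} ∪
         {ω | (r : ℝ) * ((m + k : ℕ) : ℝ) ≤
            ∑ j ∈ Finset.range r, (N j Set.univ ω : ℝ)})) :=
        (measure_mono hincl).trans (measure_iUnion_le _)
    _ ≤ ∑' k : ℕ, ENNReal.ofReal (2 * Real.exp ((c₀ - ((m + k : ℕ) : ℝ)) * r)) := by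
        apply ENNReal.tsum_le_tsum
        intro k
        refine (measure_union_le _ _).trans ?_
        refine (add_le_add (hb1 (m + k) (le_add_right hm)) (hb2 (m + k))).trans ?_
        rw [← ENNReal.ofReal_add (Real.exp_pos _).le (Real.exp_pos _).le]
        apply ENNReal.ofReal_le_ofReal
        have hcmp : Real.exp (-((m + k : ℕ) : ℝ) * r) ≤ Real.exp ((c₀ - ((m + k : ℕ) : ℝ)) * r) := by
          apply Real.exp_le_exp.mpr
          have : (0 : ℝ) ≤ c₀ * r := mul_nonneg hc₀0 hrR.le
          nlinarith
        linarith
    _ = ENNReal.ofReal (∑' k : ℕ, 2 * Real.exp ((c₀ - ((m + k : ℕ) : ℝ)) * r)) :=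
        (ENNReal.ofReal_tsum_of_nonneg (fun k => by positivity) hsummable).symm
    _ ≤ ENNReal.ofReal (4 * Real.exp ((c₀ - m) * r)) := ENNReal.ofReal_le_ofReal htsum
end G

/-- Exponential tightness for empirical means of i.i.d. Poisson random measures.
Let `E` be a compact metric space, `τ` a finite Borel measure on `E`, and for each
`ℓ ≥ 1` let `Γ_ℓ ⊆ E` be compact with `τ(E∖Γ_ℓ) ≤ ℓ/(e^{2ℓ²} − 1)`. Set
`K_ℓ = {ν : ν(E∖Γ_ℓ) ≤ 1/ℓ, ν(E) ≤ ℓ}` and `L_m = ∩_{ℓ ≥ m} K_ℓ`. Then each `L_m` is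
compact in the weak topology on finite measures, and if
`ζ_n = ρ_n⁻¹ Σ_{ℓ < ρ_n} ζ^{(ℓ)}` with `(ζ^{(ℓ)})` i.i.d. Poisson random measures of
intensity `τ`, then `limsup_n (1/ρ_n) log P(ζ_n ∉ L_m) ≤ −(m − τ(E)(e − 1))` (stated
in eventual-exponential form); hence `(ζ_n)` is exponentially tight. -/
theorem poisson_empirical_measure_exponential_tightness
    {E : Type*} [MetricSpace E] [CompactSpace E] [MeasurableSpace E] [BorelSpace E]
    {Ω : Type*} [MeasurableSpace Ω] (P : Measure Ω) [IsProbabilityMeasure P]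
    (τ : Measure E) [IsFiniteMeasure τ]
    (Γ : ℕ → Set E)
    (hΓcpt : ∀ ℓ : ℕ, 1 ≤ ℓ → IsCompact (Γ ℓ))
    (hΓτ : ∀ ℓ : ℕ, 1 ≤ ℓ →
      τ (Γ ℓ)ᶜ ≤ ENNReal.ofReal ((ℓ : ℝ) / (Real.exp (2 * (ℓ : ℝ) ^ 2) - 1)))
    (ρ : ℕ → ℕ) (hρpos : ∀ n, 1 ≤ ρ n)
    (hρ : Tendsto (fun n => (ρ n : ℝ)) atTop atTop)
    (ζ : ℕ → Ω → Measure E) (N : ℕ → Set E → Ω → ℕ)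
    (hval : ∀ (ℓ : ℕ) (A : Set E), MeasurableSet A → ∀ ω, ζ ℓ ω A = (N ℓ A ω : ℝ≥0∞))
    (hmeas : ∀ (ℓ : ℕ) (A : Set E), MeasurableSet A → Measurable (N ℓ A))
    (hlaw : ∀ (ℓ : ℕ) (A : Set E), MeasurableSet A →
      Measure.map (N ℓ A) P = (poissonPMF (τ A).toNNReal).toMeasure)
    (hζmeas : ∀ ℓ, Measurable (ζ ℓ))
    (hiid : iIndepFun ζ P) :
    (∀ m : ℕ, 1 ≤ m → IsCompact {ν : FiniteMeasure E |
        ∀ ℓ : ℕ, m ≤ ℓ →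
          (ν : Measure E) (Γ ℓ)ᶜ ≤ ((ℓ : ℝ≥0∞))⁻¹ ∧
          (ν : Measure E) Set.univ ≤ (ℓ : ℝ≥0∞)}) ∧
    (∀ m : ℕ, 1 ≤ m → ∀ δ : ℝ, 0 < δ → ∀ᶠ n : ℕ in atTop,
      (P {ω | ¬ (∀ ℓ : ℕ, m ≤ ℓ →
          ((ρ n : ℝ≥0∞)⁻¹ • ∑ j ∈ Finset.range (ρ n), ζ j ω) (Γ ℓ)ᶜ ≤ ((ℓ : ℝ≥0∞))⁻¹ ∧
          ((ρ n : ℝ≥0∞)⁻¹ • ∑ j ∈ Finset.range (ρ n), ζ j ω) Set.univ ≤ (ℓ : ℝ≥0∞))}).toReal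
        ≤ Real.exp ((-((m : ℝ) - (τ Set.univ).toReal * (Real.exp 1 - 1)) + δ) * ρ n)) ∧
    (∀ M : ℝ, ∃ K : Set (FiniteMeasure E), IsCompact K ∧
      ∀ δ : ℝ, 0 < δ → ∀ᶠ n : ℕ in atTop,
        (P {ω | ¬ ∃ ν ∈ K, (ν : Measure E)
            = (ρ n : ℝ≥0∞)⁻¹ • ∑ j ∈ Finset.range (ρ n), ζ j ω}).toReal
          ≤ Real.exp ((-M + δ) * ρ n)) := by
  classical
  set c₀ : ℝ := (τ Set.univ).toReal * (Real.exp 1 - 1) with hc₀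
  have he1 : (2 : ℝ) ≤ Real.exp 1 := by
    have := Real.add_one_le_exp (1 : ℝ)
    linarith
  have hc₀0 : 0 ≤ c₀ := mul_nonneg ENNReal.toReal_nonneg (by linarith)
  have part2 : ∀ m : ℕ, 1 ≤ m → ∀ δ : ℝ, 0 < δ → ∀ᶠ n : ℕ in atTop,
      (P {ω | ¬ (∀ ℓ : ℕ, m ≤ ℓ →
          ((ρ n : ℝ≥0∞)⁻¹ • ∑ j ∈ Finset.range (ρ n), ζ j ω) (Γ ℓ)ᶜ ≤ ((ℓ : ℝ≥0∞))⁻¹ ∧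
          ((ρ n : ℝ≥0∞)⁻¹ • ∑ j ∈ Finset.range (ρ n), ζ j ω) Set.univ ≤ (ℓ : ℝ≥0∞))}).toReal
        ≤ Real.exp ((-((m : ℝ) - c₀) + δ) * ρ n) := by
    intro m hm δ hδ
    have hev : ∀ᶠ n : ℕ in atTop, Real.log 4 ≤ δ * ρ n := by
      have h4 : ∀ᶠ n : ℕ in atTop, Real.log 4 / δ ≤ (ρ n : ℝ) := hρ.eventually_ge_atTop _
      filter_upwards [h4] with n hn
      calc Real.log 4 = δ * (Real.log 4 / δ) := by field_simp
        _ ≤ δ * ρ n := mul_le_mul_of_nonneg_left hn hδ.le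
    filter_upwards [hev] with n hn
    have hkey := key_bound P τ Γ hΓcpt hΓτ ζ N hval hmeas hlaw hζmeas hiid m hm (ρ n) (hρpos n)
    have h1 : (P {ω | ¬ (∀ ℓ : ℕ, m ≤ ℓ →
        ((ρ n : ℝ≥0∞)⁻¹ • ∑ j ∈ Finset.range (ρ n), ζ j ω) (Γ ℓ)ᶜ ≤ ((ℓ : ℝ≥0∞))⁻¹ ∧
        ((ρ n : ℝ≥0∞)⁻¹ • ∑ j ∈ Finset.range (ρ n), ζ j ω) Set.univ ≤ (ℓ : ℝ≥0∞))}).toReal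
        ≤ 4 * Real.exp ((c₀ - m) * ρ n) :=
      ENNReal.toReal_le_of_le_ofReal (by positivity) hkey
    refine h1.trans ?_
    have h4 : (4 : ℝ) ≤ Real.exp (δ * ρ n) := by
      rw [← Real.exp_log (by norm_num : (0 : ℝ) < 4)]
      exact Real.exp_le_exp.mpr hn
    calc 4 * Real.exp ((c₀ - m) * ρ n)
        ≤ Real.exp (δ * ρ n) * Real.exp ((c₀ - m) * ρ n) :=
          mul_le_mul_of_nonneg_right h4 (Real.exp_pos _).le
      _ = Real.exp ((-((m : ℝ) - c₀) + δ) * ρ n) := by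
          rw [← Real.exp_add]
          congr 1
          ring
  refine ⟨fun m hm => compact_Lset Γ hΓcpt m hm, part2, ?_⟩
  intro M
  set m : ℕ := max 1 ⌈M + c₀⌉₊ with hmdef
  have hm1 : 1 ≤ m := le_max_left _ _
  have hmM : M + c₀ ≤ (m : ℝ) := by
    refine le_trans (Nat.le_ceil _) ?_
    exact_mod_cast le_max_right 1 ⌈M + c₀⌉₊
  refine ⟨{ν : FiniteMeasure E | ∀ ℓ : ℕ, m ≤ ℓ →
      (ν : Measure E) (Γ ℓ)ᶜ ≤ ((ℓ : ℝ≥0∞))⁻¹ ∧ (ν : Measure E) Set.univ ≤ (ℓ : ℝ≥0∞)},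
    compact_Lset Γ hΓcpt m hm1, ?_⟩
  intro δ hδ
  filter_upwards [part2 m hm1 δ hδ] with n hn
  have hsub : {ω | ¬ ∃ ν ∈ {ν : FiniteMeasure E | ∀ ℓ : ℕ, m ≤ ℓ →
        (ν : Measure E) (Γ ℓ)ᶜ ≤ ((ℓ : ℝ≥0∞))⁻¹ ∧ (ν : Measure E) Set.univ ≤ (ℓ : ℝ≥0∞)},
        (ν : Measure E) = (ρ n : ℝ≥0∞)⁻¹ • ∑ j ∈ Finset.range (ρ n), ζ j ω}
      ⊆ {ω | ¬ (∀ ℓ : ℕ, m ≤ ℓ →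
          ((ρ n : ℝ≥0∞)⁻¹ • ∑ j ∈ Finset.range (ρ n), ζ j ω) (Γ ℓ)ᶜ ≤ ((ℓ : ℝ≥0∞))⁻¹ ∧
          ((ρ n : ℝ≥0∞)⁻¹ • ∑ j ∈ Finset.range (ρ n), ζ j ω) Set.univ ≤ (ℓ : ℝ≥0∞))} := by
    intro ω hω
    simp only [Set.mem_setOf_eq] at hω ⊢
    intro hall
    apply hω
    have hfin : IsFiniteMeasure ((ρ n : ℝ≥0∞)⁻¹ • ∑ j ∈ Finset.range (ρ n), ζ j ω) := by
      constructor
      calc ((ρ n : ℝ≥0∞)⁻¹ • ∑ j ∈ Finset.range (ρ n), ζ j ω) Set.univ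
          ≤ (m : ℝ≥0∞) := (hall m le_rfl).2
        _ < ∞ := ENNReal.natCast_lt_top m
    exact ⟨⟨_, hfin⟩, hall, rfl⟩
  have h2 := ENNReal.toReal_mono (measure_ne_top P _) (measure_mono hsub)
  refine h2.trans (hn.trans ?_)
  apply Real.exp_le_exp.mpr
  have hρ0 : (0 : ℝ) ≤ ρ n := Nat.cast_nonneg _
  have hM : -((m : ℝ) - c₀) ≤ -M := by linarith
  exact mul_le_mul_of_nonneg_right (by linarith) hρ0
end
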